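/- arXiv:0908.3266 — 5 statements merged into one kernel-verified Lean document; each statement's English description precedes it below -/
import Mathlib

section
/- Let d ≥ 2 be even, q a power of an odd prime, a_1,…,a_d ∈ F_q nonzero, and S = {x ∈ F_q^d : ∑ a_j x_j² = 0}. For m ∈ F_q^d define (dσ)^∨(m) = |S|^{−1} ∑_{x∈S} χ(x·m). Then: (dσ)^∨(0) = q^{d−1}/|S| + (G^d/|S|)(1−q^{−1})η(a_1⋯a_d); if m ≠ 0 and ∑_j m_j²/a_j = 0 then (dσ)^∨(m) = (G^d/|S|)(1−q^{−1})η(a_1⋯a_d); and if ∑_j m_j²/a_j ≠ 0 then (dσ)^∨(m) = −(G^d/(q|S|))η(a_1⋯a_d). -/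
open Finset BigOperators
open scoped Classical

set_option linter.unusedSectionVars false

/-- The quadratic character of a finite field, valued in `ℂ`. -/
noncomputable def quadChar {F : Type} [Field F] (t : F) : ℂ :=
  if t = 0 then 0 else if IsSquare t then 1 else -1

/-- The Gauss sum `G = ∑_{s ≠ 0} η(s) χ(s)` (note `η(0) = 0`). -/
noncomputable def gaussSumQuad {F : Type} [Field F] [Fintype F] (χ : AddChar F ℂ) : ℂ :=
  ∑ s : F, quadChar s * χ s

noncomputable def etaC (F : Type) [Field F] [Fintype F] : MulChar F ℂ :=
  (quadraticChar F).ringHomComp (Int.castRingHom ℂ)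

section aux
variable {F : Type} [Field F] [Fintype F]

lemma quadChar_eq_etaC (t : F) : quadChar t = etaC F t := by
  simp only [quadChar, etaC, MulChar.ringHomComp_apply, quadraticChar_apply, quadraticCharFun]
  split_ifs <;> simp

lemma gaussSumQuad_eq (χ : AddChar F ℂ) : gaussSumQuad χ = gaussSum (etaC F) χ := by
  simp [gaussSumQuad, gaussSum, quadChar_eq_etaC]

lemma etaC_mul_self' {t : F} (ht : t ≠ 0) : etaC F t * etaC F t = 1 := by
  have h := quadraticChar_sq_one ht
  have h2 : ((quadraticChar F t : ℤ) : ℂ) * ((quadraticChar F t : ℤ) : ℂ) = 1 := by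
    rw [← Int.cast_mul, ← pow_two, h]; norm_num
  simpa [etaC, MulChar.ringHomComp_apply] using h2

lemma addChar_sum (χ : AddChar F ℂ) {ι : Type*} (s : Finset ι) (f : ι → F) :
    χ (∑ i ∈ s, f i) = ∏ i ∈ s, χ (f i) := by
  induction s using Finset.cons_induction with
  | empty => simp
  | cons i s hi ih => rw [Finset.sum_cons, Finset.prod_cons, AddChar.map_add_eq_mul, ih]

lemma sum_quad (hchar : ringChar F ≠ 2) {χ : AddChar F ℂ} (hχ : χ ≠ 1) {b : F} (hb : b ≠ 0) :
    ∑ y : F, χ (b * y ^ 2) = etaC F b * gaussSum (etaC F) χ := by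
  have hprim : χ.IsPrimitive := AddChar.IsPrimitive.of_ne_one hχ
  have step1 : ∑ y : F, χ (b * y ^ 2)
      = ∑ u : F, ∑ y ∈ univ.filter (fun y : F => y ^ 2 = u), χ (b * y ^ 2) :=
    (Finset.sum_fiberwise_of_maps_to (fun y _ => Finset.mem_univ _) _).symm
  have step2 : ∀ u : F, ∑ y ∈ univ.filter (fun y : F => y ^ 2 = u), χ (b * y ^ 2)
      = (((quadraticChar F u : ℤ) : ℂ) + 1) * χ (b * u) := by
    intro u
    rw [Finset.sum_congr rfl (fun y hy => by rw [(Finset.mem_filter.mp hy).2]),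
      Finset.sum_const, nsmul_eq_mul]
    congr 1
    have h := quadraticChar_card_sqrts hchar u
    have hcard : ((univ.filter fun y : F => y ^ 2 = u).card : ℤ)
        = quadraticChar F u + 1 := by rw [← h]; congr 1; rw [Set.toFinset_setOf]
    exact_mod_cast congrArg (fun z : ℤ => (z : ℂ)) hcard
  rw [step1]
  simp only [step2, add_mul, one_mul, Finset.sum_add_distrib]
  have hzero : ∑ u : F, χ (b * u) = 0 := by
    have := AddChar.sum_mulShift b hprim
    simp only [hb, if_false, Nat.cast_zero] at this
    rw [← this]; exact Finset.sum_congr rfl fun u _ => by rw [mul_comm]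
  have hgs : ∑ u : F, ((quadraticChar F u : ℤ) : ℂ) * χ (b * u)
      = etaC F b * gaussSum (etaC F) χ := by
    have key := gaussSum_mulShift (etaC F) χ (Units.mk0 b hb)
    have h1 : gaussSum (etaC F) (AddChar.mulShift χ (Units.mk0 b hb))
        = ∑ u : F, ((quadraticChar F u : ℤ) : ℂ) * χ (b * u) := by
      simp [gaussSum, AddChar.mulShift_apply, etaC, MulChar.ringHomComp_apply]
    rw [h1] at key
    have h2 : etaC F b * (etaC F (Units.mk0 b hb : F) *
        (∑ u : F, ((quadraticChar F u : ℤ) : ℂ) * χ (b * u))) =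
        etaC F b * gaussSum (etaC F) χ := by rw [key]
    rw [← mul_assoc] at h2
    have hb2 : etaC F b * etaC F b = 1 := by
      have := quadraticChar_sq_one hb
      have h3 : ((quadraticChar F b : ℤ) : ℂ) * ((quadraticChar F b : ℤ) : ℂ) = 1 := by
        rw [← Int.cast_mul, ← pow_two, this]; norm_num
      simpa [etaC, MulChar.ringHomComp_apply] using h3
    simpa [Units.val_mk0, hb2] using h2
  rw [hzero, hgs, add_zero]

lemma sum_quad_lin (hchar : ringChar F ≠ 2) {χ : AddChar F ℂ} (hχ : χ ≠ 1) {b : F} (hb : b ≠ 0)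
    (c : F) : ∑ y : F, χ (b * y ^ 2 + y * c)
      = etaC F b * gaussSum (etaC F) χ * χ (-(c ^ 2) / (4 * b)) := by
  have h2 : (2 : F) ≠ 0 := Ring.two_ne_zero hchar
  have h4 : (4 : F) ≠ 0 := by
    have : (4 : F) = 2 * 2 := by norm_num
    rw [this]; exact mul_ne_zero h2 h2
  have hbij : Function.Bijective (fun z : F => z - c / (2 * b)) :=
    (Equiv.subRight (c / (2 * b))).bijective
  have step : ∑ y : F, χ (b * y ^ 2 + y * c)
      = ∑ z : F, χ (b * z ^ 2 + -(c ^ 2) / (4 * b)) := by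
    refine (Fintype.sum_bijective _ hbij _ _ fun z => ?_).symm
    congr 1
    field_simp
    all_goals first | tauto | ring
  rw [step]
  have : ∀ z : F, χ (b * z ^ 2 + -(c ^ 2) / (4 * b))
      = χ (b * z ^ 2) * χ (-(c ^ 2) / (4 * b)) := fun z => AddChar.map_add_eq_mul χ _ _
  simp only [this, ← Finset.sum_mul, sum_quad hchar hχ hb]

lemma main_sum (d : ℕ) (heven : Even d) (hchar : ringChar F ≠ 2)
    {χ : AddChar F ℂ} (hχ : χ ≠ 1) (a : Fin d → F) (ha : ∀ j, a j ≠ 0) (m : Fin d → F) :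
    (Fintype.card F : ℂ) *
        ∑ x ∈ univ.filter (fun x : Fin d → F => ∑ j, a j * x j ^ 2 = 0), χ (∑ j, x j * m j)
      = (if m = 0 then (Fintype.card F : ℂ) ^ d else 0)
        + gaussSum (etaC F) χ ^ d * etaC F (∏ j, a j) *
          (if (∑ j, m j ^ 2 / a j) = 0 then ((Fintype.card F : ℂ) - 1) else -1) := by
  have hprim : χ.IsPrimitive := AddChar.IsPrimitive.of_ne_one hχ
  have h2 : (2 : F) ≠ 0 := Ring.two_ne_zero hchar
  have h4 : (4 : F) ≠ 0 := by
    have : (4 : F) = 2 * 2 := by norm_num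
    rw [this]; exact mul_ne_zero h2 h2
  set q : ℂ := (Fintype.card F : ℂ) with hq
  set G : ℂ := gaussSum (etaC F) χ with hG
  set Q : (Fin d → F) → F := fun x => ∑ j, a j * x j ^ 2 with hQ
  set L : (Fin d → F) → F := fun x => ∑ j, x j * m j with hL
  set c : F := ∑ j, m j ^ 2 / a j with hc
  have hms : ∀ b : F, (∑ t : F, χ (t * b)) = if b = 0 then q else 0 := by
    intro b
    have := AddChar.sum_mulShift b hprim
    rcases eq_or_ne b 0 with hb | hb <;> simp [hb] at this ⊢ <;> first | exact_mod_cast this | rfl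
  -- step 1
  have step1 : ∑ x : Fin d → F, (∑ t : F, χ (t * Q x)) * χ (L x)
      = q * ∑ x ∈ univ.filter (fun x : Fin d → F => Q x = 0), χ (L x) := by
    rw [Finset.mul_sum, Finset.sum_filter]
    refine Finset.sum_congr rfl fun x _ => ?_
    rw [hms (Q x)]
    split_ifs <;> simp
  -- step 2
  have step2 : ∑ x : Fin d → F, (∑ t : F, χ (t * Q x)) * χ (L x)
      = ∑ t : F, ∑ x : Fin d → F, χ (t * Q x + L x) := by
    simp only [Finset.sum_mul, ← AddChar.map_add_eq_mul]
    exact Finset.sum_comm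
  -- t = 0 term
  have t0 : ∑ x : Fin d → F, χ ((0 : F) * Q x + L x) = if m = 0 then q ^ d else 0 := by
    simp only [zero_mul, zero_add, hL]
    have e : ∀ x : Fin d → F, χ (∑ j, x j * m j) = ∏ j, χ (x j * m j) :=
      fun x => addChar_sum χ _ _
    simp only [e]
    rw [← Fintype.piFinset_univ, Finset.sum_prod_piFinset univ (fun j y => χ (y * m j))]
    have e2 : ∀ j, ∑ y : F, χ (y * m j) = if m j = 0 then q else 0 := fun j => hms (m j)
    simp only [e2]
    by_cases hm : m = 0
    · simp [hm, Finset.prod_const, Finset.card_univ]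
    · obtain ⟨j, hj⟩ : ∃ j, m j ≠ 0 := by
        by_contra h; push_neg at h; exact hm (funext h)
      rw [if_neg hm]
      exact Finset.prod_eq_zero (Finset.mem_univ j) (by rw [if_neg hj])
  -- t ≠ 0 term
  have tne : ∀ t : F, t ≠ 0 → ∑ x : Fin d → F, χ (t * Q x + L x)
      = G ^ d * etaC F (∏ j, a j) * χ (-c / (4 * t)) := by
    intro t ht
    have harg : ∀ x : Fin d → F, t * Q x + L x = ∑ j, (t * a j * x j ^ 2 + x j * m j) := by
      intro x
      rw [Finset.sum_add_distrib, hQ, hL, Finset.mul_sum]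
      simp only [mul_assoc]
    simp only [harg]
    have e : ∀ x : Fin d → F, χ (∑ j, (t * a j * x j ^ 2 + x j * m j))
        = ∏ j, χ (t * a j * x j ^ 2 + x j * m j) := fun x => addChar_sum χ _ _
    simp only [e]
    rw [← Fintype.piFinset_univ,
      Finset.sum_prod_piFinset univ (fun j y => χ (t * a j * y ^ 2 + y * m j))]
    have hfac : ∀ j, ∑ y : F, χ (t * a j * y ^ 2 + y * m j)
        = etaC F (t * a j) * G * χ (-(m j ^ 2) / (4 * (t * a j))) :=
      fun j => sum_quad_lin hchar hχ (mul_ne_zero ht (ha j)) (m j)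
    simp only [hfac]
    rw [Finset.prod_mul_distrib, Finset.prod_mul_distrib]
    have p1 : ∏ j : Fin d, etaC F (t * a j) = etaC F (∏ j, a j) := by
      simp only [map_mul]
      rw [Finset.prod_mul_distrib, Finset.prod_const, Finset.card_univ, Fintype.card_fin,
        ← map_prod]
      have hpow : etaC F t ^ d = 1 := by
        obtain ⟨k, hk⟩ := heven
        rw [hk, pow_add, ← mul_pow, etaC_mul_self' ht, one_pow]
      rw [hpow, one_mul]
    have p2 : ∏ _j : Fin d, G = G ^ d := by
      rw [Finset.prod_const, Finset.card_univ, Fintype.card_fin]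
    have p3 : ∏ j : Fin d, χ (-(m j ^ 2) / (4 * (t * a j))) = χ (-c / (4 * t)) := by
      rw [← addChar_sum]
      congr 1
      have e3 : ∀ j : Fin d, -(m j ^ 2) / (4 * (t * a j)) = (m j ^ 2 / a j) * (-1 / (4 * t)) := by
        intro j
        have haj := ha j
        field_simp
        try ring
        try tauto
      rw [Finset.sum_congr rfl fun j _ => e3 j, ← Finset.sum_mul, ← hc]
      ring
    rw [p1, p2, p3]; ring
  -- sum over t ≠ 0 of χ(-c/(4t))
  have hsum_erase : ∑ s ∈ univ.erase (0 : F), χ s = -1 := by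
    have h0 : ∑ s : F, χ s = 0 := AddChar.sum_eq_zero_of_ne_one hχ
    have h1 : χ 0 + ∑ s ∈ univ.erase (0 : F), χ s = ∑ s : F, χ s :=
      Finset.add_sum_erase _ _ (Finset.mem_univ 0)
    rw [h0, AddChar.map_zero_eq_one] at h1
    exact eq_neg_of_add_eq_zero_right h1
  have hCsum : ∑ t ∈ univ.erase (0 : F), χ (-c / (4 * t)) = if c = 0 then q - 1 else -1 := by
    by_cases hcz : c = 0
    · rw [if_pos hcz]
      have e4 : ∀ t ∈ univ.erase (0 : F), χ (-c / (4 * t)) = 1 := by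
        intro t _; rw [hcz, neg_zero, zero_div, AddChar.map_zero_eq_one]
      rw [Finset.sum_congr rfl e4, Finset.sum_const, Finset.card_erase_of_mem (Finset.mem_univ 0),
        Finset.card_univ, nsmul_eq_mul, mul_one]
      have h1 : 1 ≤ Fintype.card F := Fintype.card_pos
      rw [Nat.cast_sub h1, Nat.cast_one]
    · rw [if_neg hcz, ← hsum_erase]
      refine Finset.sum_nbij' (i := fun t => -c / (4 * t)) (j := fun s => -c / (4 * s))
        ?_ ?_ ?_ ?_ ?_
      · intro t ht
        simp only [Finset.mem_erase, Finset.mem_univ, and_true] at ht ⊢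
        exact div_ne_zero (neg_ne_zero.mpr hcz) (mul_ne_zero h4 ht)
      · intro t ht
        simp only [Finset.mem_erase, Finset.mem_univ, and_true] at ht ⊢
        exact div_ne_zero (neg_ne_zero.mpr hcz) (mul_ne_zero h4 ht)
      · intro t ht
        simp only [Finset.mem_erase, Finset.mem_univ, and_true] at ht
        field_simp
      · intro t ht
        simp only [Finset.mem_erase, Finset.mem_univ, and_true] at ht
        field_simp
      · intro t ht; rfl
  -- assemble
  rw [← step1, step2, ← Finset.add_sum_erase univ _ (Finset.mem_univ (0 : F)), t0,
    Finset.sum_congr rfl (fun t ht => tne t (Finset.mem_erase.mp ht).1), ← Finset.mul_sum,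
    hCsum]

/-- explicit formula for `(dσ)^∨` in even dimensions `d ≥ 2`. -/
theorem statement4 (d : ℕ) (hd : 2 ≤ d) (heven : Even d)
    (F : Type) [Field F] [Fintype F] (hchar : ringChar F ≠ 2)
    (χ : AddChar F ℂ) (hχ : χ ≠ 1)
    (a : Fin d → F) (ha : ∀ j, a j ≠ 0) :
    let S : Finset (Fin d → F) := Finset.univ.filter fun x => ∑ j, a j * x j ^ 2 = 0
    let σv : (Fin d → F) → ℂ := fun m => (S.card : ℂ)⁻¹ * ∑ x ∈ S, χ (∑ j, x j * m j)
    let G : ℂ := gaussSumQuad χ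
    let q : ℂ := (Fintype.card F : ℂ)
    (σv 0 = q ^ (d - 1) / (S.card : ℂ) +
      G ^ d / (S.card : ℂ) * (1 - q⁻¹) * quadChar (∏ j, a j)) ∧
    (∀ m : Fin d → F, m ≠ 0 → ∑ j, m j ^ 2 / a j = 0 →
      σv m = G ^ d / (S.card : ℂ) * (1 - q⁻¹) * quadChar (∏ j, a j)) ∧
    (∀ m : Fin d → F, ∑ j, m j ^ 2 / a j ≠ 0 →
      σv m = -(G ^ d / (q * (S.card : ℂ))) * quadChar (∏ j, a j)) := by
  intro S σv G q
  have hq0 : q ≠ 0 := by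
    have : (0 : ℕ) < Fintype.card F := Fintype.card_pos
    exact_mod_cast Nat.cast_ne_zero.mpr this.ne'
  have hS0 : (0 : Fin d → F) ∈ S := by
    simp only [S, Finset.mem_filter, Finset.mem_univ, true_and]
    simp
  have hSc : (S.card : ℂ) ≠ 0 := by
    have : 0 < S.card := Finset.card_pos.mpr ⟨_, hS0⟩
    exact_mod_cast Nat.cast_ne_zero.mpr this.ne'
  have hGdef : G = gaussSum (etaC F) χ := gaussSumQuad_eq χ
  have key : ∀ m : Fin d → F, ∑ x ∈ S, χ (∑ j, x j * m j)
      = ((if m = 0 then q ^ d else 0)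
        + G ^ d * etaC F (∏ j, a j) *
          (if (∑ j, m j ^ 2 / a j) = 0 then (q - 1) else -1)) / q := by
    intro m
    rw [eq_div_iff hq0, mul_comm, hGdef]
    exact main_sum d heven hchar hχ a ha m
  have hη : quadChar (∏ j, a j) = etaC F (∏ j, a j) := quadChar_eq_etaC _
  have hd1 : q ^ (d - 1) * q = q ^ d := by
    have hd' : d - 1 + 1 = d := Nat.succ_pred_eq_of_pos (lt_of_lt_of_le two_pos hd)
    rw [← pow_succ, hd']
  refine ⟨?_, ?_, ?_⟩
  · have h := key 0
    have hc0 : (∑ j, (0 : Fin d → F) j ^ 2 / a j) = 0 := by simp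
    rw [if_pos rfl, if_pos hc0] at h
    show (S.card : ℂ)⁻¹ * ∑ x ∈ S, χ (∑ j, x j * (0 : Fin d → F) j) = _
    rw [h, hη, ← hd1]
    field_simp
    all_goals first | tauto | ring
  · intro m hm hcm
    have h := key m
    rw [if_neg hm, if_pos hcm] at h
    show (S.card : ℂ)⁻¹ * ∑ x ∈ S, χ (∑ j, x j * m j) = _
    rw [h, hη]
    field_simp
    all_goals first | tauto | ring
  · intro m hcm
    have hm : m ≠ 0 := by
      intro h0
      exact hcm (by simp [h0])
    have h := key m
    rw [if_neg hm, if_neg hcm] at h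
    show (S.card : ℂ)⁻¹ * ∑ x ∈ S, χ (∑ j, x j * m j) = _
    rw [h, hη]
    field_simp
    all_goals ring
end aux
end

section
/- Let d ≥ 2 be even, a_1,…,a_d ∈ F_q nonzero, S = {x ∈ F_q^d : ∑ a_j x_j² = 0}, and (dσ)^∨(m) = |S|^{−1} ∑_{x∈S} χ(x·m). Then (dσ)^∨(0,…,0) = 1, and there is a constant C independent of q such that |(dσ)^∨(m)| ≤ C q^{−(d−2)/2} for all m ≠ (0,…,0). -/
open Finset BigOperators
open scoped Classical

section Aux

variable {F : Type} [Field F] [Fintype F]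

private noncomputable def qch (F : Type) [Field F] [Fintype F] : MulChar F ℂ :=
  (quadraticChar F).ringHomComp (Int.castRingHom ℂ)

private lemma qch_ne_one (hF : ringChar F ≠ 2) : qch F ≠ 1 := fun h =>
  quadraticChar_ne_one hF ((MulChar.ringHomComp_eq_one_iff (Int.cast_injective)).mp h)

private lemma qch_quadratic : (qch F).IsQuadratic :=
  (quadraticChar_isQuadratic F).comp _

private lemma qch_dichotomy {b : F} (hb : b ≠ 0) : qch F b = 1 ∨ qch F b = -1 := by
  rcases quadraticChar_dichotomy hb with h | h <;>
    simp [qch, MulChar.ringHomComp_apply, h]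

private lemma qch_mul_self {b : F} (hb : b ≠ 0) : qch F b * qch F b = 1 := by
  rcases qch_dichotomy hb with h | h <;> rw [h] <;> ring

private lemma qch_norm {b : F} (hb : b ≠ 0) : ‖qch F b‖ = 1 := by
  rcases qch_dichotomy hb with h | h <;> simp [h]

private lemma addChar_map_sum {ι : Type} (ψ : AddChar F ℂ) (s : Finset ι) (f : ι → F) :
    ψ (∑ i ∈ s, f i) = ∏ i ∈ s, ψ (f i) := by
  induction s using Finset.cons_induction with
  | empty => simp
  | cons i s hi ih => rw [Finset.sum_cons, Finset.prod_cons, AddChar.map_add_eq_mul, ih]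

variable {ψ : AddChar F ℂ}

private lemma gauss_norm_sq (hF : ringChar F ≠ 2) (hψ : ψ ≠ 1) :
    ‖gaussSum (qch F) ψ‖ ^ 2 = (Fintype.card F : ℝ) := by
  have h := gaussSum_sq (qch_ne_one hF) qch_quadratic (AddChar.IsPrimitive.of_ne_one hψ)
  have : ‖gaussSum (qch F) ψ ^ 2‖ = (Fintype.card F : ℝ) := by
    rw [h, norm_mul, qch_norm (neg_ne_zero.mpr one_ne_zero), one_mul, Complex.norm_natCast]
  rwa [norm_pow] at this

/-- Sum of `ψ (b y²)`. -/
private lemma sumA (hF : ringChar F ≠ 2) (hψ : ψ ≠ 1) {b : F} (hb : b ≠ 0) :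
    ∑ y : F, ψ (b * y ^ 2) = qch F b * gaussSum (qch F) ψ := by
  have hprim := AddChar.IsPrimitive.of_ne_one hψ
  have hcard : ∀ u : F, ((Finset.univ.filter fun y : F => y ^ 2 = u).card : ℂ)
      = 1 + qch F u := by
    intro u
    have h := quadraticChar_card_sqrts hF u
    have hset : {x : F | x ^ 2 = u}.toFinset = Finset.univ.filter fun y : F => y ^ 2 = u := by
      ext x; simp [Set.mem_toFinset]
    rw [hset] at h
    have h2 := congrArg (Int.cast : ℤ → ℂ) h
    push_cast at h2
    rw [h2]
    simp [qch, MulChar.ringHomComp_apply]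
    ring
  have step1 : ∑ y : F, ψ (b * y ^ 2)
      = ∑ u : F, ((Finset.univ.filter fun y : F => y ^ 2 = u).card : ℂ) * ψ (b * u) := by
    rw [← Finset.sum_fiberwise Finset.univ (fun y : F => y ^ 2) (fun y => ψ (b * y ^ 2))]
    refine Finset.sum_congr rfl fun u _ => ?_
    rw [Finset.sum_congr rfl (fun y hy => ?_), Finset.sum_const, nsmul_eq_mul]
    rw [(Finset.mem_filter.mp hy).2]
  have step2 : ∑ u : F, ψ (b * u) = 0 := by
    calc ∑ u : F, ψ (b * u) = ∑ u : F, (ψ.mulShift b) u := by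
          simp [AddChar.mulShift_apply]
      _ = 0 := AddChar.sum_eq_zero_of_ne_one (hprim hb)
  have step3 : ∑ u : F, qch F u * ψ (b * u) = gaussSum (qch F) (ψ.mulShift b) := by
    simp [gaussSum, AddChar.mulShift_apply]
  have step4 : gaussSum (qch F) (ψ.mulShift b) = qch F b * gaussSum (qch F) ψ := by
    have h := gaussSum_mulShift (qch F) ψ (Units.mk0 b hb)
    simp only [Units.val_mk0] at h
    have h2 : qch F b * (qch F b * gaussSum (qch F) (ψ.mulShift b))
        = qch F b * gaussSum (qch F) ψ := by rw [h]
    rwa [← mul_assoc, qch_mul_self hb, one_mul] at h2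
  calc ∑ y : F, ψ (b * y ^ 2)
      = ∑ u : F, (1 + qch F u) * ψ (b * u) := by
        rw [step1]; exact Finset.sum_congr rfl fun u _ => by rw [hcard u]
    _ = ∑ u : F, ψ (b * u) + ∑ u : F, qch F u * ψ (b * u) := by
        rw [← Finset.sum_add_distrib]
        exact Finset.sum_congr rfl fun u _ => by ring
    _ = qch F b * gaussSum (qch F) ψ := by rw [step2, step3, step4, zero_add]

/-- Completing the square. -/
private lemma sumB (hF : ringChar F ≠ 2) (hψ : ψ ≠ 1) {b : F} (hb : b ≠ 0) (c : F) :
    ∑ y : F, ψ (b * y ^ 2 + c * y)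
      = ψ (-(c ^ 2 * (4 * b)⁻¹)) * (qch F b * gaussSum (qch F) ψ) := by
  have h2 : (2 : F) ≠ 0 := Ring.two_ne_zero hF
  have h4 : (4 : F) ≠ 0 := by
    intro h
    have : (2 : F) * 2 = 0 := by rw [show (2:F)*2 = 4 by norm_num, h]
    exact h2 (by rcases mul_eq_zero.mp this with h' | h' <;> exact h')
  set s : F := c * (2 * b)⁻¹ with hs
  have key : ∀ y : F, b * y ^ 2 + c * y = b * (y + s) ^ 2 + -(c ^ 2 * (4 * b)⁻¹) := by
    intro y
    rw [hs]
    field_simp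
    ring
  calc ∑ y : F, ψ (b * y ^ 2 + c * y)
      = ∑ y : F, ψ (b * (y + s) ^ 2) * ψ (-(c ^ 2 * (4 * b)⁻¹)) := by
        refine Finset.sum_congr rfl fun y _ => ?_
        rw [key y, AddChar.map_add_eq_mul]
    _ = (∑ y : F, ψ (b * (y + s) ^ 2)) * ψ (-(c ^ 2 * (4 * b)⁻¹)) := by
        rw [← Finset.sum_mul]
    _ = (∑ y : F, ψ (b * y ^ 2)) * ψ (-(c ^ 2 * (4 * b)⁻¹)) := by
        congr 1
        exact Fintype.sum_equiv (Equiv.addRight s)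
          (fun y => ψ (b * (y + s) ^ 2)) (fun z => ψ (b * z ^ 2)) (fun y => by simp)
    _ = ψ (-(c ^ 2 * (4 * b)⁻¹)) * (qch F b * gaussSum (qch F) ψ) := by
        rw [sumA hF hψ hb]; ring

private lemma sumB_norm (hF : ringChar F ≠ 2) (hψ : ψ ≠ 1) {b : F} (hb : b ≠ 0) (c : F) :
    ‖∑ y : F, ψ (b * y ^ 2 + c * y)‖ = ‖gaussSum (qch F) ψ‖ := by
  rw [sumB hF hψ hb c, norm_mul, norm_mul, AddChar.norm_apply, qch_norm hb, one_mul, one_mul]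

end Aux

/-- Fourier decay of the surface measure in even dimensions `d ≥ 2`:
`(dσ)^∨(0) = 1` and `|(dσ)^∨(m)| ≤ C q^{−(d−2)/2}` for `m ≠ 0`, with `C`
independent of `q`. -/
theorem statement6 (d : ℕ) (hd : 2 ≤ d) (heven : Even d) :
    ∃ C : ℝ, 0 < C ∧
      ∀ (F : Type) [Field F] [Fintype F], ringChar F ≠ 2 →
        ∀ (χ : AddChar F ℂ), χ ≠ 1 →
          ∀ a : Fin d → F, (∀ j, a j ≠ 0) →
            (let S : Finset (Fin d → F) :=
              Finset.univ.filter fun x => ∑ j, a j * x j ^ 2 = 0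
            let σv : (Fin d → F) → ℂ :=
              fun m => (S.card : ℂ)⁻¹ * ∑ x ∈ S, χ (∑ j, x j * m j)
            σv 0 = 1 ∧
            ∀ m : Fin d → F, m ≠ 0 →
              ‖σv m‖ ≤ C * (Fintype.card F : ℝ) ^ (-(((d : ℝ) - 2) / 2))) := by
  classical
  obtain ⟨k, hk⟩ := heven
  have hd2k : d = 2 * k := by omega
  have hk1 : 1 ≤ k := by omega
  refine ⟨2, by norm_num, ?_⟩
  intro F _ _ hF χ hχ a ha
  intro S σv
  set q := Fintype.card F with hq
  have hq0 : 0 < q := Fintype.card_pos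
  have hq3 : 3 ≤ q := by
    have h1 := FiniteField.odd_card_of_char_ne_two hF
    have h2 : 1 < q := Fintype.one_lt_card
    omega
  have hq0R : (0:ℝ) < (q:ℝ) := by exact_mod_cast hq0
  have hprim := AddChar.IsPrimitive.of_ne_one hχ
  -- the inner character sum
  have hT : ∀ s : F, (∑ t : F, χ (t * s)) = if s = 0 then (q:ℂ) else 0 := by
    intro s
    by_cases hs : s = 0
    · simp [hs, hq]
    · rw [if_neg hs]
      calc ∑ t : F, χ (t * s) = ∑ t : F, (χ.mulShift s) t := by
            simp [AddChar.mulShift_apply, mul_comm]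
        _ = 0 := AddChar.sum_eq_zero_of_ne_one (hprim hs)
  -- the key identity
  have key : ∀ m : Fin d → F,
      (q:ℂ) * ∑ x ∈ S, χ (∑ j, x j * m j)
        = ∑ t : F, ∏ j, ∑ y : F, χ (t * a j * y ^ 2 + m j * y) := by
    intro m
    have fact : ∀ t : F, ∑ x : Fin d → F, χ (t * (∑ j, a j * x j ^ 2) + ∑ j, x j * m j)
        = ∏ j, ∑ y : F, χ (t * a j * y ^ 2 + m j * y) := by
      intro t
      rw [Fintype.prod_sum]
      refine Finset.sum_congr rfl fun x _ => ?_
      rw [← addChar_map_sum]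
      congr 1
      rw [Finset.mul_sum, ← Finset.sum_add_distrib]
      exact Finset.sum_congr rfl fun j _ => by ring
    calc (q:ℂ) * ∑ x ∈ S, χ (∑ j, x j * m j)
        = ∑ x ∈ S, (q:ℂ) * χ (∑ j, x j * m j) := Finset.mul_sum _ _ _
      _ = ∑ x : Fin d → F, if (∑ j, a j * x j ^ 2) = 0
            then (q:ℂ) * χ (∑ j, x j * m j) else 0 := Finset.sum_filter _ _
      _ = ∑ x : Fin d → F, (∑ t : F, χ (t * (∑ j, a j * x j ^ 2))) * χ (∑ j, x j * m j) := by
          refine Finset.sum_congr rfl fun x _ => ?_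
          rw [hT, ite_mul, zero_mul]
      _ = ∑ x : Fin d → F, ∑ t : F, χ (t * (∑ j, a j * x j ^ 2) + ∑ j, x j * m j) := by
          refine Finset.sum_congr rfl fun x _ => ?_
          rw [Finset.sum_mul]
          exact Finset.sum_congr rfl fun t _ => (AddChar.map_add_eq_mul χ _ _).symm
      _ = ∑ t : F, ∑ x : Fin d → F, χ (t * (∑ j, a j * x j ^ 2) + ∑ j, x j * m j) :=
          Finset.sum_comm
      _ = _ := Finset.sum_congr rfl fun t _ => fact t
  -- gauss sum norm
  have hgnorm_d : ‖gaussSum (qch F) χ‖ ^ d = (q:ℝ)^k := by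
    rw [hd2k, pow_mul, gauss_norm_sq hF hχ]
  have hPt : ∀ (m : Fin d → F) (t : F), t ≠ 0 →
      ‖∏ j, ∑ y : F, χ (t * a j * y ^ 2 + m j * y)‖ = (q:ℝ)^k := by
    intro m t ht
    rw [norm_prod]
    calc ∏ j, ‖∑ y : F, χ (t * a j * y ^ 2 + m j * y)‖
        = ∏ _j : Fin d, ‖gaussSum (qch F) χ‖ := Finset.prod_congr rfl fun j _ =>
            sumB_norm hF hχ (mul_ne_zero ht (ha j)) (m j)
      _ = ‖gaussSum (qch F) χ‖ ^ d := by
          rw [Finset.prod_const, Finset.card_univ, Fintype.card_fin]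
      _ = (q:ℝ)^k := hgnorm_d
  have hcard_erase : ((Finset.univ.erase (0:F)).card : ℝ) ≤ (q:ℝ) := by
    have h1 : (Finset.univ.erase (0:F)).card ≤ q := by
      calc (Finset.univ.erase (0:F)).card ≤ (Finset.univ : Finset F).card :=
            Finset.card_le_card (Finset.erase_subset _ _)
        _ = q := Finset.card_univ
    exact_mod_cast h1
  have hqk0 : (0:ℝ) < (q:ℝ)^k := by positivity
  have htail : ∀ m : Fin d → F,
      ‖∑ t ∈ Finset.univ.erase (0:F), ∏ j, ∑ y : F, χ (t * a j * y ^ 2 + m j * y)‖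
        ≤ (q:ℝ) * (q:ℝ)^k := by
    intro m
    calc ‖∑ t ∈ Finset.univ.erase (0:F), ∏ j, ∑ y : F, χ (t * a j * y ^ 2 + m j * y)‖
        ≤ ∑ t ∈ Finset.univ.erase (0:F),
            ‖∏ j, ∑ y : F, χ (t * a j * y ^ 2 + m j * y)‖ := norm_sum_le _ _
      _ = ∑ _t ∈ Finset.univ.erase (0:F), (q:ℝ)^k :=
          Finset.sum_congr rfl fun t ht => hPt m t (Finset.ne_of_mem_erase ht)
      _ = ((Finset.univ.erase (0:F)).card : ℝ) * (q:ℝ)^k := by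
          rw [Finset.sum_const, nsmul_eq_mul]
      _ ≤ (q:ℝ) * (q:ℝ)^k := by
          exact mul_le_mul_of_nonneg_right hcard_erase (le_of_lt hqk0)
  have hsplit : ∀ m : Fin d → F,
      ∑ t : F, ∏ j, ∑ y : F, χ (t * a j * y ^ 2 + m j * y)
        = (∏ j, ∑ y : F, χ ((0:F) * a j * y ^ 2 + m j * y))
          + ∑ t ∈ Finset.univ.erase (0:F), ∏ j, ∑ y : F, χ (t * a j * y ^ 2 + m j * y) :=
    fun m => (Finset.add_sum_erase Finset.univ _ (Finset.mem_univ (0:F))).symm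
  -- S is nonempty
  have h0S : (0 : Fin d → F) ∈ S := by
    simp [S]
  have hN0 : 0 < S.card := Finset.card_pos.mpr ⟨_, h0S⟩
  have hN0R : (0:ℝ) < (S.card : ℝ) := by exact_mod_cast hN0
  have hN0C : (S.card : ℂ) ≠ 0 := by exact_mod_cast hN0.ne'
  constructor
  · -- σv 0 = 1
    show (S.card : ℂ)⁻¹ * ∑ x ∈ S, χ (∑ j, x j * (0 : Fin d → F) j) = 1
    have : ∑ x ∈ S, χ (∑ j, x j * (0 : Fin d → F) j) = (S.card : ℂ) := by
      rw [Finset.sum_congr rfl fun x _ => ?_]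
      · rw [Finset.sum_const, nsmul_eq_mul, mul_one]
      · simp
    rw [this, inv_mul_cancel₀ hN0C]
  · -- the decay estimate
    intro m hm
    -- lower bound on S.card
    have hsum1 : ∑ x ∈ S, χ (∑ j, x j * (0 : Fin d → F) j) = (S.card : ℂ) := by
      have h1 : ∀ x ∈ S, χ (∑ j, x j * (0 : Fin d → F) j) = 1 := fun x _ => by simp
      rw [Finset.sum_congr rfl h1, Finset.sum_const, nsmul_eq_mul, mul_one]
    have hP0 : ∏ j, ∑ y : F, χ ((0:F) * a j * y ^ 2 + (0 : Fin d → F) j * y) = (q:ℂ)^d := by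
      calc ∏ j, ∑ y : F, χ ((0:F) * a j * y ^ 2 + (0 : Fin d → F) j * y)
          = ∏ _j : Fin d, (q:ℂ) := Finset.prod_congr rfl fun j _ => by simp [hq]
        _ = (q:ℂ)^d := by rw [Finset.prod_const, Finset.card_univ, Fintype.card_fin]
    have hNeq : (q:ℂ) * (S.card : ℂ) - (q:ℂ)^d
        = ∑ t ∈ Finset.univ.erase (0:F),
            ∏ j, ∑ y : F, χ (t * a j * y ^ 2 + (0 : Fin d → F) j * y) := by
      have h1 := key 0
      rw [hsum1, hsplit 0, hP0] at h1
      linear_combination h1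
    have hNlow : (q:ℝ)^(d-1) - (q:ℝ)^k ≤ (S.card : ℝ) := by
      have h2 : ‖(q:ℂ) * (S.card : ℂ) - (q:ℂ)^d‖ ≤ (q:ℝ) * (q:ℝ)^k := by
        rw [hNeq]; exact htail 0
      have h3 : |(q:ℝ) * (S.card : ℝ) - (q:ℝ)^d| ≤ (q:ℝ) * (q:ℝ)^k := by
        have : ((q:ℂ) * (S.card : ℂ) - (q:ℂ)^d)
            = (((q:ℝ) * (S.card : ℝ) - (q:ℝ)^d : ℝ) : ℂ) := by push_cast; ring
        rwa [this, Complex.norm_real] at h2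
      have h4 : (q:ℝ)^d - (q:ℝ) * (q:ℝ)^k ≤ (q:ℝ) * (S.card : ℝ) := by
        have := abs_le.mp h3
        linarith [this.1]
      have h5 : (q:ℝ)^d = (q:ℝ) * (q:ℝ)^(d-1) := by
        rw [← pow_succ']
        congr 1
        omega
      rw [h5] at h4
      nlinarith
    -- bound on the character sum
    have hSig : ‖∑ x ∈ S, χ (∑ j, x j * m j)‖ ≤ (q:ℝ)^k := by
      obtain ⟨j0, hj0⟩ : ∃ j, m j ≠ 0 := by
        by_contra h; push_neg at h; exact hm (funext h)
      have hT0 : ∏ j, ∑ y : F, χ ((0:F) * a j * y ^ 2 + m j * y) = 0 := by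
        apply Finset.prod_eq_zero (Finset.mem_univ j0)
        calc ∑ y : F, χ ((0:F) * a j0 * y ^ 2 + m j0 * y)
            = ∑ y : F, (χ.mulShift (m j0)) y := by
              simp [AddChar.mulShift_apply, mul_comm]
          _ = 0 := AddChar.sum_eq_zero_of_ne_one (hprim hj0)
      have h2 : (q:ℂ) * ∑ x ∈ S, χ (∑ j, x j * m j)
          = ∑ t ∈ Finset.univ.erase (0:F),
              ∏ j, ∑ y : F, χ (t * a j * y ^ 2 + m j * y) := by
        rw [key m, hsplit m, hT0, zero_add]
      have h3 : (q:ℝ) * ‖∑ x ∈ S, χ (∑ j, x j * m j)‖ ≤ (q:ℝ) * (q:ℝ)^k := by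
        calc (q:ℝ) * ‖∑ x ∈ S, χ (∑ j, x j * m j)‖
            = ‖(q:ℂ) * ∑ x ∈ S, χ (∑ j, x j * m j)‖ := by
              rw [norm_mul, Complex.norm_natCast]
          _ ≤ (q:ℝ) * (q:ℝ)^k := by rw [h2]; exact htail m
      exact le_of_mul_le_mul_left h3 hq0R
    have hnorm : ‖σv m‖ = ((S.card : ℝ))⁻¹ * ‖∑ x ∈ S, χ (∑ j, x j * m j)‖ := by
      show ‖(S.card : ℂ)⁻¹ * ∑ x ∈ S, χ (∑ j, x j * m j)‖ = _
      rw [norm_mul, norm_inv, Complex.norm_natCast]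
    by_cases hd2 : d = 2
    · -- trivial bound
      have htriv : ‖σv m‖ ≤ 1 := by
        rw [hnorm]
        have hb : ‖∑ x ∈ S, χ (∑ j, x j * m j)‖ ≤ (S.card : ℝ) := by
          calc ‖∑ x ∈ S, χ (∑ j, x j * m j)‖ ≤ ∑ x ∈ S, ‖χ (∑ j, x j * m j)‖ :=
                norm_sum_le _ _
            _ = ∑ _x ∈ S, (1:ℝ) := Finset.sum_congr rfl fun x _ => AddChar.norm_apply χ _
            _ = (S.card : ℝ) := by rw [Finset.sum_const, nsmul_eq_mul, mul_one]
        calc ((S.card : ℝ))⁻¹ * ‖∑ x ∈ S, χ (∑ j, x j * m j)‖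
            ≤ ((S.card : ℝ))⁻¹ * (S.card : ℝ) :=
              mul_le_mul_of_nonneg_left hb (inv_nonneg.mpr hN0R.le)
          _ = 1 := inv_mul_cancel₀ hN0R.ne'
      have hexp : (-(((d : ℝ) - 2) / 2)) = 0 := by
        subst hd2; norm_num
      rw [hexp, Real.rpow_zero]
      linarith
    · -- d ≥ 4
      have hk2 : 2 ≤ k := by omega
      have hdk : d - 1 = k + (k - 1) := by omega
      have hpowsplit : (q:ℝ)^(d-1) = (q:ℝ)^k * (q:ℝ)^(k-1) := by
        rw [hdk, pow_add]
      have hqk1 : (0:ℝ) < (q:ℝ)^(k-1) := by positivity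
      -- q^k ≤ q^(d-1)/2
      have hksmall : (q:ℝ)^k ≤ (q:ℝ)^(d-1)/2 := by
        have h1 : k + 1 ≤ d - 1 := by omega
        have h2 : (q:ℝ)^(k+1) ≤ (q:ℝ)^(d-1) :=
          pow_le_pow_right₀ (by exact_mod_cast Nat.one_le_of_lt hq3) h1
        have h3 : (q:ℝ)^(k+1) = (q:ℝ) * (q:ℝ)^k := by rw [pow_succ']
        have hq3R : (3:ℝ) ≤ (q:ℝ) := by exact_mod_cast hq3
        nlinarith [hqk0]
      have hNhalf : (q:ℝ)^(d-1)/2 ≤ (S.card : ℝ) := by linarith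
      have hNd : (0:ℝ) < (q:ℝ)^(d-1)/2 := by positivity
      have hinv : ((S.card : ℝ))⁻¹ ≤ ((q:ℝ)^(d-1)/2)⁻¹ :=
        inv_anti₀ hNd hNhalf
      have hfinal : ‖σv m‖ ≤ 2 * ((q:ℝ)^(k-1))⁻¹ := by
        rw [hnorm]
        calc ((S.card : ℝ))⁻¹ * ‖∑ x ∈ S, χ (∑ j, x j * m j)‖
            ≤ ((q:ℝ)^(d-1)/2)⁻¹ * (q:ℝ)^k := by
              apply mul_le_mul hinv hSig (norm_nonneg _) (by positivity)
          _ = 2 * ((q:ℝ)^(k-1))⁻¹ := by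
              rw [hpowsplit]
              field_simp
      have hexp : (q:ℝ) ^ (-(((d : ℝ) - 2) / 2)) = ((q:ℝ)^(k-1))⁻¹ := by
        have h1 : -(((d : ℝ) - 2) / 2) = -(((k - 1 : ℕ) : ℝ)) := by
          have : ((d:ℕ) : ℝ) = 2 * (k : ℝ) := by exact_mod_cast congrArg (Nat.cast : ℕ → ℝ) hd2k
          rw [this]
          have : ((k - 1 : ℕ) : ℝ) = (k : ℝ) - 1 := by
            have : (1:ℕ) ≤ k := hk1
            push_cast [Nat.cast_sub this]
            ring
          rw [this]; ring
        rw [h1, Real.rpow_neg (le_of_lt hq0R), Real.rpow_natCast]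
      rw [hexp]
      exact hfinal
end

section
/- Let d ≥ 2 be even, b_1,…,b_d ∈ F_q nonzero, and S = {m ∈ F_q^d : b_1 m_1² + ⋯ + b_d m_d² = 0}. Then there is a constant C independent of q such that for every subset E ⊂ F_q^d, ∑_{m∈S} |Ê(m)|² ≤ C · min{ q^{−(d+1)} |E|^{(d+2)/d}, q^{−d} |E| }, where Ê(m) = q^{−d} ∑_{x∈F_q^d} χ(−x·m) 1_E(x). -/
open Finset BigOperators
open scoped Classical
set_option maxHeartbeats 1000000

section aux
variable {F : Type} [Field F] [Fintype F]

lemma aux_conj_char (χ : AddChar F ℂ) (a : F) :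
    (starRingEnd ℂ) (χ a) = χ (-a) := by
  have hpos : 0 < ringChar F :=
    Nat.pos_of_ne_zero (CharP.ringChar_ne_zero_of_finite F)
  rw [AddChar.starComp_apply hpos, AddChar.inv_apply]

lemma aux_sum_vec {d : ℕ} (χ : AddChar F ℂ) (hχ : χ ≠ 1) (c : Fin d → F) :
    ∑ n : Fin d → F, χ (∑ j, c j * n j) =
      if c = 0 then ((Fintype.card F : ℂ)) ^ d else 0 := by
  by_cases hc : c = 0
  · simp [hc, Finset.card_univ, Fintype.card_fun]
  · rw [if_neg hc]
    set f : (Fin d → F) →+ F :=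
      { toFun := fun n => ∑ j, c j * n j
        map_zero' := by simp
        map_add' := by intro n m; simp [mul_add, Finset.sum_add_distrib] } with hf
    have hne : χ.compAddMonoidHom f ≠ 1 := by
      obtain ⟨x, hx⟩ := AddChar.ne_one_iff.1 hχ
      obtain ⟨j, hj⟩ := Function.ne_iff.1 hc
      refine AddChar.ne_one_iff.2 ⟨(Pi.single j ((c j)⁻¹ * x) : Fin d → F), ?_⟩
      have hsum : ∑ i, c i * (Pi.single j ((c j)⁻¹ * x) : Fin d → F) i = x := by
        rw [Finset.sum_eq_single j]
        · rw [Pi.single_eq_same, ← mul_assoc, mul_inv_cancel₀ hj, one_mul]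
        · intro i _ hij
          rw [Pi.single_eq_of_ne hij, mul_zero]
        · intro h; exact absurd (Finset.mem_univ j) h
      simpa [hf, hsum] using hx
    have := AddChar.sum_eq_zero_of_ne_one hne
    simpa [hf] using this

lemma aux_gauss {d : ℕ} (hF : ringChar F ≠ 2) (χ : AddChar F ℂ) (hχ : χ ≠ 1)
    (b : Fin d → F) (hb : ∀ j, b j ≠ 0) {s : F} (hs : s ≠ 0) (t : Fin d → F) :
    (∑ m : Fin d → F, χ (s * ∑ j, b j * m j ^ 2 + ∑ j, t j * m j)) *
      (starRingEnd ℂ) (∑ m : Fin d → F, χ (s * ∑ j, b j * m j ^ 2 + ∑ j, t j * m j)) =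
      ((Fintype.card F : ℂ)) ^ d := by
  set A : (Fin d → F) → F := fun m => s * ∑ j, b j * m j ^ 2 + ∑ j, t j * m j with hA
  have key : ∀ n w : Fin d → F,
      A (n + w) - A n = A w + ∑ j, (2 * s * b j * w j) * n j := by
    intro n w
    simp only [hA, Pi.add_apply]
    rw [Finset.mul_sum, Finset.mul_sum, Finset.mul_sum]
    rw [← Finset.sum_add_distrib, ← Finset.sum_add_distrib, ← Finset.sum_sub_distrib,
      ← Finset.sum_add_distrib, ← Finset.sum_add_distrib]
    exact Finset.sum_congr rfl fun j _ => by ring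
  calc (∑ m : Fin d → F, χ (A m)) * (starRingEnd ℂ) (∑ m : Fin d → F, χ (A m))
      = ∑ n : Fin d → F, ∑ m : Fin d → F, χ (A m - A n) := by
        rw [map_sum, Finset.sum_mul_sum]
        rw [Finset.sum_comm]
        refine Finset.sum_congr rfl fun n _ => Finset.sum_congr rfl fun m _ => ?_
        rw [aux_conj_char, ← AddChar.map_add_eq_mul, sub_eq_add_neg]
    _ = ∑ n : Fin d → F, ∑ w : Fin d → F, χ (A (n + w) - A n) := by
        refine Finset.sum_congr rfl fun n _ => ?_
        exact (Fintype.sum_equiv (Equiv.addLeft n) _ _ fun w => rfl).symm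
    _ = ∑ w : Fin d → F, χ (A w) * ∑ n : Fin d → F, χ (∑ j, (2 * s * b j * w j) * n j) := by
        rw [Finset.sum_comm]
        refine Finset.sum_congr rfl fun w _ => ?_
        rw [Finset.mul_sum]
        refine Finset.sum_congr rfl fun n _ => ?_
        rw [key n w, AddChar.map_add_eq_mul]
    _ = ((Fintype.card F : ℂ)) ^ d := by
        rw [Finset.sum_eq_single (0 : Fin d → F)]
        · have : (fun j => 2 * s * b j * (0 : Fin d → F) j) = 0 := by
            funext j; simp
          rw [aux_sum_vec χ hχ, if_pos this]
          simp [hA]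
        · intro w _ hw
          have hcne : (fun j => 2 * s * b j * w j) ≠ 0 := by
            obtain ⟨j, hj⟩ := Function.ne_iff.1 hw
            refine Function.ne_iff.2 ⟨j, ?_⟩
            simp only [Pi.zero_apply]
            exact mul_ne_zero (mul_ne_zero (mul_ne_zero (Ring.two_ne_zero hF) hs) (hb j))
              (by simpa using hj)
          rw [aux_sum_vec χ hχ, if_neg hcne, mul_zero]
        · intro h; exact absurd (Finset.mem_univ _) h

lemma aux_norm_G {d e : ℕ} (hde : d = e + e) (hF : ringChar F ≠ 2) (χ : AddChar F ℂ)
    (hχ : χ ≠ 1) (b : Fin d → F) (hb : ∀ j, b j ≠ 0) {s : F} (hs : s ≠ 0) (t : Fin d → F) :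
    ‖∑ m : Fin d → F, χ (s * ∑ j, b j * m j ^ 2 + ∑ j, t j * m j)‖ ≤
      (Fintype.card F : ℝ) ^ e := by
  set G := ∑ m : Fin d → F, χ (s * ∑ j, b j * m j ^ 2 + ∑ j, t j * m j) with hG
  have h1 : G * (starRingEnd ℂ) G = ((Fintype.card F : ℂ)) ^ d :=
    aux_gauss hF χ hχ b hb hs t
  rw [Complex.mul_conj] at h1
  have h2 : Complex.normSq G = (Fintype.card F : ℝ) ^ d := by
    exact_mod_cast h1
  have h3 : ‖G‖ ^ 2 = ((Fintype.card F : ℝ) ^ e) ^ 2 := by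
    rw [← Complex.sq_norm] at *
    rw [h2, hde, ← pow_mul, mul_two]
  have h4 : (0:ℝ) ≤ (Fintype.card F : ℝ) ^ e := by positivity
  nlinarith [norm_nonneg G]

lemma aux_qK {d : ℕ} (χ : AddChar F ℂ) (hχ : χ ≠ 1) (b : Fin d → F) (t : Fin d → F) :
    ((Fintype.card F : ℂ)) *
        ∑ m ∈ Finset.univ.filter (fun m : Fin d → F => ∑ j, b j * m j ^ 2 = 0),
          χ (∑ j, t j * m j) =
      ∑ s : F, ∑ m : Fin d → F, χ (s * ∑ j, b j * m j ^ 2 + ∑ j, t j * m j) := by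
  rw [Finset.sum_comm]
  rw [Finset.sum_filter, Finset.mul_sum]
  refine Finset.sum_congr rfl fun m _ => ?_
  have : ∑ s : F, χ (s * ∑ j, b j * m j ^ 2 + ∑ j, t j * m j) =
      (∑ s : F, χ (s * ∑ j, b j * m j ^ 2)) * χ (∑ j, t j * m j) := by
    rw [Finset.sum_mul]
    exact Finset.sum_congr rfl fun s _ => (AddChar.map_add_eq_mul χ _ _)
  rw [this, AddChar.sum_mulShift _ (AddChar.IsPrimitive.of_ne_one hχ)]
  split_ifs with h
  · rw [mul_comm]
  · simp

lemma aux_K_ne {d e : ℕ} (hde : d = e + e) (hF : ringChar F ≠ 2) (χ : AddChar F ℂ)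
    (hχ : χ ≠ 1) (b : Fin d → F) (hb : ∀ j, b j ≠ 0) {t : Fin d → F} (ht : t ≠ 0) :
    (Fintype.card F : ℝ) *
        ‖∑ m ∈ Finset.univ.filter (fun m : Fin d → F => ∑ j, b j * m j ^ 2 = 0),
          χ (∑ j, t j * m j)‖ ≤ (Fintype.card F : ℝ) ^ (e + 1) := by
  have h1 : (Fintype.card F : ℝ) *
      ‖∑ m ∈ Finset.univ.filter (fun m : Fin d → F => ∑ j, b j * m j ^ 2 = 0),
        χ (∑ j, t j * m j)‖ =
      ‖∑ s : F, ∑ m : Fin d → F, χ (s * ∑ j, b j * m j ^ 2 + ∑ j, t j * m j)‖ := by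
    rw [← aux_qK χ hχ b t, norm_mul]
    simp
  rw [h1]
  calc ‖∑ s : F, ∑ m : Fin d → F, χ (s * ∑ j, b j * m j ^ 2 + ∑ j, t j * m j)‖
      ≤ ∑ s : F, ‖∑ m : Fin d → F, χ (s * ∑ j, b j * m j ^ 2 + ∑ j, t j * m j)‖ :=
        norm_sum_le _ _
    _ ≤ ∑ _s : F, (Fintype.card F : ℝ) ^ e := by
        refine Finset.sum_le_sum fun s _ => ?_
        by_cases hs : s = 0
        · subst hs
          have h0 : ∑ m : Fin d → F, χ ((0:F) * ∑ j, b j * m j ^ 2 + ∑ j, t j * m j) =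
              ∑ m : Fin d → F, χ (∑ j, t j * m j) := by
            refine Finset.sum_congr rfl fun m _ => ?_; rw [zero_mul, zero_add]
          rw [h0, aux_sum_vec χ hχ, if_neg ht]
          simp only [norm_zero]
          positivity
        · exact aux_norm_G hde hF χ hχ b hb hs t
    _ = (Fintype.card F : ℝ) ^ (e + 1) := by
        rw [Finset.sum_const, Finset.card_univ, nsmul_eq_mul, pow_succ, mul_comm]

lemma aux_K_zero {d e : ℕ} (hde : d = e + e) (he1 : 1 ≤ e) (hF : ringChar F ≠ 2)
    (χ : AddChar F ℂ) (hχ : χ ≠ 1) (b : Fin d → F) (hb : ∀ j, b j ≠ 0) :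
    (Fintype.card F : ℝ) *
        ‖∑ m ∈ Finset.univ.filter (fun m : Fin d → F => ∑ j, b j * m j ^ 2 = 0),
          χ (∑ j, (0 : Fin d → F) j * m j)‖ ≤ 2 * (Fintype.card F : ℝ) ^ d := by
  have hq1 : (1:ℝ) ≤ (Fintype.card F : ℝ) := by
    exact_mod_cast Nat.one_le_iff_ne_zero.2 Fintype.card_ne_zero
  have h1 : (Fintype.card F : ℝ) *
      ‖∑ m ∈ Finset.univ.filter (fun m : Fin d → F => ∑ j, b j * m j ^ 2 = 0),
        χ (∑ j, (0 : Fin d → F) j * m j)‖ =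
      ‖∑ s : F, ∑ m : Fin d → F,
        χ (s * ∑ j, b j * m j ^ 2 + ∑ j, (0 : Fin d → F) j * m j)‖ := by
    rw [← aux_qK χ hχ b 0, norm_mul]
    simp
  rw [h1]
  calc ‖∑ s : F, ∑ m : Fin d → F,
        χ (s * ∑ j, b j * m j ^ 2 + ∑ j, (0 : Fin d → F) j * m j)‖
      ≤ ∑ s : F, ‖∑ m : Fin d → F,
          χ (s * ∑ j, b j * m j ^ 2 + ∑ j, (0 : Fin d → F) j * m j)‖ := norm_sum_le _ _
    _ ≤ ∑ s : F, ((Fintype.card F : ℝ) ^ e +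
          (if s = 0 then (Fintype.card F : ℝ) ^ d else 0)) := by
        refine Finset.sum_le_sum fun s _ => ?_
        by_cases hs : s = 0
        · subst hs
          rw [if_pos rfl]
          have h0 : ∑ m : Fin d → F,
              χ ((0:F) * ∑ j, b j * m j ^ 2 + ∑ j, (0 : Fin d → F) j * m j) =
              ∑ m : Fin d → F, (1 : ℂ) := by
            refine Finset.sum_congr rfl fun m _ => ?_
            simp
          rw [h0]
          simp only [Finset.sum_const, Finset.card_univ, nsmul_eq_mul, mul_one]
          rw [Fintype.card_fun, Fintype.card_fin]
          have : ‖((Fintype.card F ^ d : ℕ) : ℂ)‖ = (Fintype.card F : ℝ) ^ d := by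
            rw [Complex.norm_natCast]; push_cast; ring
          rw [this]
          have : (0:ℝ) ≤ (Fintype.card F : ℝ) ^ e := by positivity
          linarith
        · rw [if_neg hs, add_zero]
          exact aux_norm_G hde hF χ hχ b hb hs 0
    _ ≤ 2 * (Fintype.card F : ℝ) ^ d := by
        rw [Finset.sum_add_distrib, Finset.sum_const, Finset.card_univ, nsmul_eq_mul]
        rw [Finset.sum_ite_eq' Finset.univ (0:F) (fun _ => (Fintype.card F : ℝ) ^ d)]
        rw [if_pos (Finset.mem_univ _)]
        have h2 : (Fintype.card F : ℝ) * (Fintype.card F : ℝ) ^ e ≤ (Fintype.card F : ℝ) ^ d := by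
          rw [← pow_succ']
          exact pow_le_pow_right₀ hq1 (by omega)
        linarith

lemma aux_TT {d : ℕ} (χ : AddChar F ℂ) (E : Finset (Fin d → F)) (M : Finset (Fin d → F)) :
    ∑ m ∈ M, ‖∑ x ∈ E, χ (-(∑ j, x j * m j))‖ ^ 2 =
      (∑ x ∈ E, ∑ y ∈ E, ∑ m ∈ M, χ (∑ j, (y - x) j * m j)).re := by
  have h1 : ∀ w : ℂ, ‖w‖ ^ 2 = (w * (starRingEnd ℂ) w).re := fun w => by
    rw [Complex.mul_conj, Complex.ofReal_re, Complex.normSq_eq_norm_sq]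
  calc ∑ m ∈ M, ‖∑ x ∈ E, χ (-(∑ j, x j * m j))‖ ^ 2
      = (∑ m ∈ M, (∑ x ∈ E, χ (-(∑ j, x j * m j))) *
          (starRingEnd ℂ) (∑ y ∈ E, χ (-(∑ j, y j * m j)))).re := by
        rw [Complex.re_sum]
        exact Finset.sum_congr rfl fun m _ => h1 _
    _ = (∑ x ∈ E, ∑ y ∈ E, ∑ m ∈ M, χ (∑ j, (y - x) j * m j)).re := by
        congr 1
        have h2 : ∀ m : Fin d → F,
            (∑ x ∈ E, χ (-(∑ j, x j * m j))) *
              (starRingEnd ℂ) (∑ y ∈ E, χ (-(∑ j, y j * m j))) =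
            ∑ x ∈ E, ∑ y ∈ E, χ (∑ j, (y - x) j * m j) := by
          intro m
          rw [map_sum, Finset.sum_mul_sum]
          refine Finset.sum_congr rfl fun x _ => Finset.sum_congr rfl fun y _ => ?_
          rw [aux_conj_char, neg_neg, ← AddChar.map_add_eq_mul]
          congr 1
          simp only [Pi.sub_apply, sub_mul, Finset.sum_sub_distrib]
          rw [neg_add_eq_sub]
        rw [Finset.sum_congr rfl fun m _ => h2 m]
        rw [Finset.sum_comm]
        exact Finset.sum_congr rfl fun x _ => Finset.sum_comm

end aux

/-- restriction estimate for indicator functions. For even `d ≥ 2` and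
`S = {b₁m₁² + ⋯ + b_d m_d² = 0}`, for every `E ⊆ F_q^d`,
`∑_{m∈S} |Ê(m)|² ≤ C min{q^{−(d+1)}|E|^{(d+2)/d}, q^{−d}|E|}` with `C` independent of `q`. -/
theorem statement10 (d : ℕ) (hd : 2 ≤ d) (heven : Even d) :
    ∃ C : ℝ, 0 < C ∧
      ∀ (F : Type) [Field F] [Fintype F], ringChar F ≠ 2 →
        ∀ (χ : AddChar F ℂ), χ ≠ 1 →
          ∀ b : Fin d → F, (∀ j, b j ≠ 0) →
            ∀ E : Finset (Fin d → F),
              (∑ m ∈ Finset.univ.filter fun m : Fin d → F => ∑ j, b j * m j ^ 2 = 0,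
                  ‖((Fintype.card F : ℂ) ^ d)⁻¹ * ∑ x ∈ E, χ (-(∑ j, x j * m j))‖ ^ (2 : ℝ)) ≤
                C * min
                  (((Fintype.card F : ℝ) ^ (d + 1))⁻¹ *
                    (E.card : ℝ) ^ (((d : ℝ) + 2) / (d : ℝ)))
                  (((Fintype.card F : ℝ) ^ d)⁻¹ * (E.card : ℝ)) := by
  obtain ⟨e, hde⟩ := heven
  have he1 : 1 ≤ e := by omega
  refine ⟨4, by norm_num, ?_⟩
  intro F _ _ hF χ hχ b hb E
  set q : ℕ := Fintype.card F with hq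
  have hq0 : (0:ℝ) < (q:ℝ) := by exact_mod_cast Fintype.card_pos
  have hq1 : (1:ℝ) ≤ (q:ℝ) := by
    exact_mod_cast Nat.one_le_iff_ne_zero.2 Fintype.card_ne_zero
  set S : Finset (Fin d → F) :=
    Finset.univ.filter (fun m : Fin d → F => ∑ j, b j * m j ^ 2 = 0) with hS
  set N : ℝ := (E.card : ℝ) with hN
  have hN0 : 0 ≤ N := by positivity
  set r : ℝ := ((d : ℝ) + 2) / (d : ℝ) with hr
  set P : ℝ := ∑ m ∈ S, ‖∑ x ∈ E, χ (-(∑ j, x j * m j))‖ ^ 2 with hP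
  -- rewrite the LHS
  have hLHS : (∑ m ∈ S,
      ‖((q : ℂ) ^ d)⁻¹ * ∑ x ∈ E, χ (-(∑ j, x j * m j))‖ ^ (2 : ℝ)) =
      (((q:ℝ) ^ d)⁻¹) ^ 2 * P := by
    rw [hP, Finset.mul_sum]
    refine Finset.sum_congr rfl fun m _ => ?_
    have : ((2:ℝ) = ((2:ℕ) : ℝ)) := by norm_num
    rw [this, Real.rpow_natCast]
    rw [norm_mul, norm_inv, norm_pow, Complex.norm_natCast, mul_pow, inv_pow, ← inv_pow]
    try ring
  rw [hLHS]
  -- Plancherel bound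
  have hPlan : P ≤ (q:ℝ) ^ d * N := by
    have hsub : P ≤ ∑ m : Fin d → F, ‖∑ x ∈ E, χ (-(∑ j, x j * m j))‖ ^ 2 := by
      refine Finset.sum_le_sum_of_subset_of_nonneg (Finset.subset_univ S) ?_
      intro m _ _; positivity
    have hfull : ∑ m : Fin d → F, ‖∑ x ∈ E, χ (-(∑ j, x j * m j))‖ ^ 2 = (q:ℝ) ^ d * N := by
      rw [aux_TT χ E Finset.univ]
      have : ∀ x y : Fin d → F,
          ∑ m : Fin d → F, χ (∑ j, (y - x) j * m j) =
          if y = x then ((q:ℂ)) ^ d else 0 := by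
        intro x y
        rw [aux_sum_vec χ hχ]
        congr 1
        simp [sub_eq_zero, funext_iff, eq_comm]
      rw [Finset.sum_congr rfl fun x _ => Finset.sum_congr rfl fun y _ => this x y]
      have : ∀ x : Fin d → F, x ∈ E →
          ∑ y ∈ E, (if y = x then ((q:ℂ)) ^ d else 0) = ((q:ℂ)) ^ d := by
        intro x hx
        rw [Finset.sum_ite_eq' E x (fun _ => ((q:ℂ)) ^ d), if_pos hx]
      rw [Finset.sum_congr rfl this, Finset.sum_const, nsmul_eq_mul]
      have hcast : ((E.card : ℂ)) * ((q:ℂ)) ^ d = (((E.card : ℝ) * ((q:ℝ)) ^ d : ℝ) : ℂ) := by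
        push_cast; ring
      rw [hcast, Complex.ofReal_re, hN]
      ring
    linarith
  -- main Gauss-sum bound
  have hMain : (q:ℝ) * P ≤ 2 * N * (q:ℝ) ^ d + N ^ 2 * (q:ℝ) ^ (e + 1) := by
    have h1 : P ≤ ∑ x ∈ E, ∑ y ∈ E, ‖∑ m ∈ S, χ (∑ j, (y - x) j * m j)‖ := by
      rw [hP, aux_TT χ E S]
      refine le_trans (Complex.re_le_norm _) ?_
      refine le_trans (norm_sum_le _ _) (Finset.sum_le_sum fun x _ => ?_)
      exact norm_sum_le _ _
    have h2 : (q:ℝ) * ∑ x ∈ E, ∑ y ∈ E, ‖∑ m ∈ S, χ (∑ j, (y - x) j * m j)‖ ≤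
        2 * N * (q:ℝ) ^ d + N ^ 2 * (q:ℝ) ^ (e + 1) := by
      rw [Finset.mul_sum]
      have h3 : ∀ x ∈ E, (q:ℝ) * ∑ y ∈ E, ‖∑ m ∈ S, χ (∑ j, (y - x) j * m j)‖ ≤
          2 * (q:ℝ) ^ d + N * (q:ℝ) ^ (e + 1) := by
        intro x hxE
        rw [Finset.mul_sum]
        have h4 : ∀ y ∈ E, (q:ℝ) * ‖∑ m ∈ S, χ (∑ j, (y - x) j * m j)‖ ≤
            (q:ℝ) ^ (e + 1) + (if y = x then 2 * (q:ℝ) ^ d else 0) := by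
          intro y _
          by_cases hyx : y = x
          · subst hyx
            rw [if_pos rfl]
            have : y - y = (0 : Fin d → F) := by simp
            rw [this]
            have := aux_K_zero hde he1 hF χ hχ b hb
            have hpe : (0:ℝ) ≤ (q:ℝ) ^ (e + 1) := by positivity
            rw [← hS] at this
            linarith
          · rw [if_neg hyx]
            have hne : y - x ≠ (0 : Fin d → F) := sub_ne_zero.2 hyx
            have := aux_K_ne hde hF χ hχ b hb hne
            rw [← hS] at this
            have hpd : (0:ℝ) ≤ 0 := le_refl 0
            linarith
        refine le_trans (Finset.sum_le_sum h4) ?_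
        rw [Finset.sum_add_distrib, Finset.sum_const, nsmul_eq_mul]
        rw [Finset.sum_ite_eq' E x (fun _ => 2 * (q:ℝ) ^ d), if_pos hxE]
        linarith
      refine le_trans (Finset.sum_le_sum h3) ?_
      rw [Finset.sum_const, nsmul_eq_mul, ← hN]
      exact le_of_eq (by ring)
    calc (q:ℝ) * P ≤ (q:ℝ) * ∑ x ∈ E, ∑ y ∈ E, ‖∑ m ∈ S, χ (∑ j, (y - x) j * m j)‖ :=
          mul_le_mul_of_nonneg_left h1 (le_of_lt hq0)
      _ ≤ _ := h2
  -- final arithmetic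
  have hPnn : 0 ≤ P := by rw [hP]; positivity
  have hqdne : ((q:ℝ) ^ d) ≠ 0 := by positivity
  have hB : (((q:ℝ) ^ d)⁻¹) ^ 2 * P ≤ ((q:ℝ) ^ d)⁻¹ * N := by
    calc (((q:ℝ) ^ d)⁻¹) ^ 2 * P ≤ (((q:ℝ) ^ d)⁻¹) ^ 2 * ((q:ℝ) ^ d * N) :=
          mul_le_mul_of_nonneg_left hPlan (by positivity)
      _ = ((q:ℝ) ^ d)⁻¹ * N := by field_simp
  have hBnn : (0:ℝ) ≤ ((q:ℝ) ^ d)⁻¹ * N := by positivity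
  have hd0 : (0:ℝ) < (d:ℝ) := by exact_mod_cast (by omega : 0 < d)
  by_cases hE : E.card = 0
  · have hN0' : N = 0 := by rw [hN, hE]; norm_num
    have hP0 : P = 0 := le_antisymm (by rw [hN0', mul_zero] at hPlan; exact hPlan) hPnn
    have hr0 : r ≠ 0 := by
      rw [hr]; positivity
    rw [hP0, hN0', mul_zero]
    simp [Real.zero_rpow hr0]
  · have hN1 : (1:ℝ) ≤ N := by
      rw [hN]; exact_mod_cast Nat.one_le_iff_ne_zero.2 hE
    have hNpos : (0:ℝ) < N := by linarith
    have hdcast : (d:ℝ) = (e:ℝ) + (e:ℝ) := by exact_mod_cast hde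
    have he0 : (0:ℝ) < (e:ℝ) := by exact_mod_cast (by omega : 0 < e)
    have hr1 : 1 ≤ r := by rw [hr, le_div_iff₀ hd0]; linarith
    have hr2 : r ≤ 2 := by
      rw [hr, div_le_iff₀ hd0]
      have : (2:ℝ) ≤ (d:ℝ) := by exact_mod_cast hd
      linarith
    have hNr : N ≤ N ^ r := by
      nth_rewrite 1 [← Real.rpow_one N]
      exact Real.rpow_le_rpow_of_exponent_le hN1 hr1
    have hNrpos : 0 < N ^ r := Real.rpow_pos_of_pos hNpos r
    by_cases hcase : N ≤ (q:ℝ) ^ e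
    · -- small-set case : use the Gauss-sum bound for the first term of the min
      have key : 2 * N * (q:ℝ) ^ d + N ^ 2 * (q:ℝ) ^ (e + 1) ≤ 4 * (q:ℝ) ^ d * N ^ r := by
        have hqd : (0:ℝ) < (q:ℝ) ^ d := by positivity
        have t1 : 2 * N * (q:ℝ) ^ d ≤ 2 * (q:ℝ) ^ d * N ^ r := by nlinarith
        have h2r : N ^ ((2:ℝ) - r) ≤ (q:ℝ) ^ (e - 1) := by
          have step : N ^ ((2:ℝ) - r) ≤ ((q:ℝ) ^ e) ^ ((2:ℝ) - r) :=
            Real.rpow_le_rpow (by linarith) hcase (by linarith)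
          refine le_trans step (le_of_eq ?_)
          rw [← Real.rpow_natCast ((q:ℝ)) e, ← Real.rpow_mul (le_of_lt hq0),
            ← Real.rpow_natCast ((q:ℝ)) (e - 1)]
          congr 1
          have hcast : ((e - 1 : ℕ) : ℝ) = (e:ℝ) - 1 := by
            push_cast [Nat.cast_sub he1]; ring
          rw [hcast, hr, hdcast]
          field_simp
          ring
        have hN2 : N ^ 2 ≤ N ^ r * (q:ℝ) ^ (e - 1) := by
          calc N ^ 2 = N ^ (2:ℝ) := by
                rw [← Real.rpow_natCast N 2]; norm_num
            _ = N ^ r * N ^ ((2:ℝ) - r) := by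
                rw [← Real.rpow_add hNpos]; ring_nf
            _ ≤ N ^ r * (q:ℝ) ^ (e - 1) :=
                mul_le_mul_of_nonneg_left h2r (le_of_lt hNrpos)
        have t2 : N ^ 2 * (q:ℝ) ^ (e + 1) ≤ (q:ℝ) ^ d * N ^ r := by
          calc N ^ 2 * (q:ℝ) ^ (e + 1)
              ≤ (N ^ r * (q:ℝ) ^ (e - 1)) * (q:ℝ) ^ (e + 1) :=
                mul_le_mul_of_nonneg_right hN2 (by positivity)
            _ = N ^ r * (q:ℝ) ^ ((e - 1) + (e + 1)) := by rw [pow_add]; ring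
            _ = (q:ℝ) ^ d * N ^ r := by
                rw [show (e - 1) + (e + 1) = d by omega]; ring
        linarith
      have hqpow : (q:ℝ) * (q:ℝ) ^ (d - 1) = (q:ℝ) ^ d := by
        rw [← pow_succ']; congr 1; omega
      have hPle : P ≤ 4 * (q:ℝ) ^ (d - 1) * N ^ r := by
        have hqP : (q:ℝ) * P ≤ 4 * (q:ℝ) ^ d * N ^ r := le_trans hMain key
        rw [← mul_le_mul_iff_right₀ hq0]
        calc (q:ℝ) * P ≤ 4 * (q:ℝ) ^ d * N ^ r := hqP
          _ = (q:ℝ) * (4 * (q:ℝ) ^ (d - 1) * N ^ r) := by rw [← hqpow]; ring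
      have hA : (((q:ℝ) ^ d)⁻¹) ^ 2 * P ≤ 4 * (((q:ℝ) ^ (d + 1))⁻¹ * N ^ r) := by
        calc (((q:ℝ) ^ d)⁻¹) ^ 2 * P
            ≤ (((q:ℝ) ^ d)⁻¹) ^ 2 * (4 * (q:ℝ) ^ (d - 1) * N ^ r) :=
              mul_le_mul_of_nonneg_left hPle (by positivity)
          _ = 4 * (((q:ℝ) ^ (d + 1))⁻¹ * N ^ r) := by
              have h1 : (q:ℝ) ^ (d - 1) * (q:ℝ) ^ (d + 1) = ((q:ℝ) ^ d) ^ 2 := by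
                rw [← pow_add, ← pow_mul]; congr 1; omega
              have h2 : ((q:ℝ) ^ (d + 1)) ≠ 0 := by positivity
              field_simp
              nlinarith [h1]
      rcases min_cases (((q:ℝ) ^ (d + 1))⁻¹ * N ^ r) (((q:ℝ) ^ d)⁻¹ * N) with ⟨hm, _⟩ | ⟨hm, _⟩ <;>
        rw [hm]
      · exact hA
      · linarith
    · -- large-set case : Plancherel suffices
      push_neg at hcase
      have hqe : (0:ℝ) < (q:ℝ) ^ e := by positivity
      have hqle : (q:ℝ) ≤ N ^ ((1:ℝ) / (e:ℝ)) := by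
        have step : ((q:ℝ) ^ e) ^ ((1:ℝ) / (e:ℝ)) ≤ N ^ ((1:ℝ) / (e:ℝ)) :=
          Real.rpow_le_rpow (le_of_lt hqe) (le_of_lt hcase) (by positivity)
        refine le_trans (le_of_eq ?_) step
        rw [← Real.rpow_natCast ((q:ℝ)) e, ← Real.rpow_mul (le_of_lt hq0)]
        rw [mul_one_div, div_self (ne_of_gt he0), Real.rpow_one]
      have hre : r = 1 + 1 / (e:ℝ) := by
        rw [hr, hdcast]; field_simp; ring
      have hsplit : N ^ r = N * N ^ ((1:ℝ) / (e:ℝ)) := by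
        rw [hre, Real.rpow_add hNpos, Real.rpow_one]
      have hBA : ((q:ℝ) ^ d)⁻¹ * N ≤ ((q:ℝ) ^ (d + 1))⁻¹ * N ^ r := by
        calc ((q:ℝ) ^ d)⁻¹ * N = ((q:ℝ) ^ (d + 1))⁻¹ * (N * (q:ℝ)) := by
              rw [pow_succ]; field_simp
          _ ≤ ((q:ℝ) ^ (d + 1))⁻¹ * (N * N ^ ((1:ℝ) / (e:ℝ))) := by
              refine mul_le_mul_of_nonneg_left ?_ (by positivity)
              exact mul_le_mul_of_nonneg_left hqle (le_of_lt hNpos)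
          _ = ((q:ℝ) ^ (d + 1))⁻¹ * N ^ r := by rw [hsplit]
      rw [min_eq_right hBA]
      linarith
end

section
/- Let d ≥ 2, S ⊂ F_q^d an algebraic variety with normalized surface measure dσ, and suppose R*(p → r) ≲ 1, i.e. the extension estimate ‖(f dσ)^∨‖_{L^r(dm)} ≤ C‖f‖_{L^p(S,dσ)} holds with C independent of q, where |S| ∼ q^{d−1}. If S contains a k-dimensional affine subspace H of F_q^d (so |H| = q^k) with k ≤ d−2, then r ≥ p(d−k)/((p−1)(d−1−k)). -/
open Finset BigOperators
open scoped Classical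

noncomputable def dotL {F : Type} [Field F] {d : ℕ} (a : Fin d → F) : (Fin d → F) →ₗ[F] F where
  toFun m := ∑ j, a j * m j
  map_add' x y := by simp [mul_add, Finset.sum_add_distrib]
  map_smul' c x := by simp [Finset.mul_sum, mul_left_comm]

lemma keylemma (d k : ℕ) (hkd : k ≤ d) (F : Type) [Field F] [Fintype F]
    (χ : AddChar F ℂ) (S : Finset (Fin d → F)) (W : Submodule F (Fin d → F)) (v : Fin d → F)
    (hWrank : Module.finrank F W = k) (hsub : ∀ w ∈ W, w + v ∈ S)
    (p r C : ℝ) (hp : 0 < p) (hr : 0 < r) (hS : (0:ℝ) < S.card)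
    (hext : ∀ f : (Fin d → F) → ℂ,
          (∑ m : Fin d → F,
              ‖(S.card : ℂ)⁻¹ * ∑ x ∈ S, f x * χ (∑ j, x j * m j)‖ ^ r) ^ ((1 : ℝ) / r) ≤
            C * ((S.card : ℝ)⁻¹ * ∑ x ∈ S, ‖f x‖ ^ p) ^ ((1 : ℝ) / p)) :
    ((Fintype.card F : ℝ) ^ (d - k) * (((Fintype.card F : ℝ) ^ k / S.card) ^ r)) ^ ((1:ℝ)/r)
      ≤ C * ((S.card : ℝ)⁻¹ * (Fintype.card F : ℝ) ^ k) ^ ((1:ℝ)/p) := by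
  set q : ℕ := Fintype.card F with hq
  -- basis of W
  have : Module.Finite F W := Module.Finite.of_finite
  let b : Module.Basis (Fin k) F W := Module.finBasisOfFinrankEq F W hWrank
  -- the orthogonal-type kernel
  let Φ : (Fin d → F) →ₗ[F] (Fin k → F) :=
    LinearMap.pi (fun i => dotL ((b i : Fin d → F)))
  have hkerrank : d - k ≤ Module.finrank F (LinearMap.ker Φ) := by
    have h1 := LinearMap.finrank_range_add_finrank_ker Φ
    have h2 : Module.finrank F (LinearMap.range Φ) ≤ k := by
      have := Submodule.finrank_le (LinearMap.range Φ)
      simpa [Module.finrank_pi] using this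
    have h3 : Module.finrank F (Fin d → F) = d := by simp [Module.finrank_pi]
    omega
  have horth : ∀ m ∈ LinearMap.ker Φ, ∀ w ∈ W, ∑ j, w j * m j = 0 := by
    intro m hm w hw
    have hΦ : Φ m = 0 := hm
    let L : W →ₗ[F] F := (dotL m).comp W.subtype
    have hL : L = 0 := by
      apply b.ext
      intro i
      have : Φ m i = 0 := by rw [hΦ]; rfl
      simpa [L, Φ, dotL, LinearMap.pi_apply, mul_comm] using this
    have := congrArg (fun (f : W →ₗ[F] F) => f ⟨w, hw⟩) hL
    simpa [L, dotL, mul_comm] using this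
  -- the coset T
  let T : Finset (Fin d → F) := Finset.image (fun w : W => (w : Fin d → F) + v) Finset.univ
  have hinj : Function.Injective (fun w : W => (w : Fin d → F) + v) := by
    intro a c h
    exact Subtype.coe_injective (by simpa using h)
  have hTcard : T.card = q ^ k := by
    rw [Finset.card_image_of_injective _ hinj, Finset.card_univ,
      Module.card_eq_pow_finrank (K := F) (V := W), hWrank]
  have hTS : T ⊆ S := by
    intro x hx
    simp only [T, Finset.mem_image] at hx
    obtain ⟨w, _, rfl⟩ := hx
    exact hsub _ w.2
  -- the test function
  set f : (Fin d → F) → ℂ := fun x => if x ∈ T then 1 else 0 with hf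
  -- RHS computation
  have hRHS : (∑ x ∈ S, ‖f x‖ ^ p) = (q : ℝ) ^ k := by
    have hzero : ∀ x ∈ S, x ∉ T → ‖f x‖ ^ p = 0 := by
      intro x _ hx
      simp [hf, hx, Real.zero_rpow (ne_of_gt hp)]
    rw [← Finset.sum_subset hTS hzero]
    have hone : ∀ x ∈ T, ‖f x‖ ^ p = 1 := by
      intro x hx
      simp [hf, hx, Real.one_rpow]
    rw [Finset.sum_congr rfl hone, Finset.sum_const, nsmul_eq_mul, mul_one, hTcard]
    push_cast
    ring
  -- per-m lower bound on kernel elements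
  have hterm : ∀ m ∈ LinearMap.ker Φ,
      ‖(S.card : ℂ)⁻¹ * ∑ x ∈ S, f x * χ (∑ j, x j * m j)‖ ^ r
        = ((q : ℝ) ^ k / S.card) ^ r := by
    intro m hm
    have hzero : ∀ x ∈ S, x ∉ T → f x * χ (∑ j, x j * m j) = 0 := by
      intro x _ hx
      simp [hf, hx]
    have hsum : (∑ x ∈ S, f x * χ (∑ j, x j * m j))
        = (T.card : ℂ) * χ (∑ j, v j * m j) := by
      rw [← Finset.sum_subset hTS hzero]
      have hconst : ∀ x ∈ T, f x * χ (∑ j, x j * m j) = χ (∑ j, v j * m j) := by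
        intro x hx
        simp only [T, Finset.mem_image] at hx
        obtain ⟨w, _, rfl⟩ := hx
        have hdot : (∑ j, ((w : Fin d → F) + v) j * m j) = ∑ j, v j * m j := by
          have h0 : ∑ j, (w : Fin d → F) j * m j = 0 := horth m hm _ w.2
          simp only [Pi.add_apply, add_mul, Finset.sum_add_distrib, h0, zero_add]
        rw [hdot]
        have hwT : (w : Fin d → F) + v ∈ T := Finset.mem_image.2 ⟨w, Finset.mem_univ _, rfl⟩
        simp [hf, hwT]
      rw [Finset.sum_congr rfl hconst, Finset.sum_const, nsmul_eq_mul]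
    rw [hsum]
    have hnorm : ‖(S.card : ℂ)⁻¹ * ((T.card : ℂ) * χ (∑ j, v j * m j))‖
        = (q : ℝ) ^ k / S.card := by
      rw [norm_mul, norm_mul, AddChar.norm_apply, norm_inv, Complex.norm_natCast,
        Complex.norm_natCast, hTcard]
      push_cast
      ring
    rw [hnorm]
  -- kernel finset
  let M : Finset (Fin d → F) := Set.toFinset (LinearMap.ker Φ : Set (Fin d → F))
  have hMcard : (q : ℝ) ^ (d - k) ≤ (M.card : ℝ) := by
    have : M.card = Fintype.card (LinearMap.ker Φ) := Set.toFinset_card _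
    rw [this, Module.card_eq_pow_finrank (K := F) (V := LinearMap.ker Φ)]
    have hq1 : 1 ≤ q := Fintype.card_pos
    exact_mod_cast Nat.pow_le_pow_right hq1 hkerrank
  -- put together  
  have hLHSsum : (q : ℝ) ^ (d - k) * (((q : ℝ) ^ k / S.card) ^ r)
      ≤ ∑ m : Fin d → F, ‖(S.card : ℂ)⁻¹ * ∑ x ∈ S, f x * χ (∑ j, x j * m j)‖ ^ r := by
    have step1 : (q : ℝ) ^ (d - k) * (((q : ℝ) ^ k / S.card) ^ r)
        ≤ ∑ m ∈ M, ‖(S.card : ℂ)⁻¹ * ∑ x ∈ S, f x * χ (∑ j, x j * m j)‖ ^ r := by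
      have : ∑ m ∈ M, ‖(S.card : ℂ)⁻¹ * ∑ x ∈ S, f x * χ (∑ j, x j * m j)‖ ^ r
          = (M.card : ℝ) * (((q : ℝ) ^ k / S.card) ^ r) := by
        rw [Finset.sum_congr rfl (fun m hm => hterm m (by simpa [M, Set.mem_toFinset] using hm)),
          Finset.sum_const, nsmul_eq_mul]
      rw [this]
      have hpos : (0:ℝ) ≤ ((q : ℝ) ^ k / S.card) ^ r := by positivity
      exact mul_le_mul_of_nonneg_right hMcard hpos
    refine step1.trans (Finset.sum_le_sum_of_subset_of_nonneg (Finset.subset_univ M) ?_)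
    intro m _ _
    positivity
  calc ((q : ℝ) ^ (d - k) * (((q : ℝ) ^ k / S.card) ^ r)) ^ ((1:ℝ)/r)
      ≤ (∑ m : Fin d → F, ‖(S.card : ℂ)⁻¹ * ∑ x ∈ S, f x * χ (∑ j, x j * m j)‖ ^ r) ^ ((1:ℝ)/r) := by
        apply Real.rpow_le_rpow (by positivity) hLHSsum (by positivity)
    _ ≤ C * ((S.card : ℝ)⁻¹ * ∑ x ∈ S, ‖f x‖ ^ p) ^ ((1:ℝ)/p) := hext f
    _ = C * ((S.card : ℝ)⁻¹ * (q : ℝ) ^ k) ^ ((1:ℝ)/p) := by rw [hRHS]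

/-- necessary condition for extension estimates from a variety containing
a `k`-dimensional affine subspace. If for every finite field `F_q` there are data
(`χ` nontrivial, `S` with `|S| ∼ q^{d−1}` containing the affine subspace `W + v` with
`dim W = k ≤ d−2`) for which the extension estimate `R*(p → r) ≤ C` holds with
constants independent of `q`, then `r ≥ p(d−k)/((p−1)(d−1−k))`. -/
theorem statement11 (d k : ℕ) (hd : 2 ≤ d) (hk : k ≤ d - 2)
    (p r c₁ c₂ C : ℝ) (hp : 1 < p) (hr : 1 ≤ r)
    (hc₁ : 0 < c₁) (hc₂ : 0 < c₂) (hC : 0 < C)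
    (H : ∀ (F : Type) [Field F] [Fintype F],
      ∃ (χ : AddChar F ℂ) (S : Finset (Fin d → F))
        (W : Submodule F (Fin d → F)) (v : Fin d → F),
        χ ≠ 1 ∧
        Module.finrank F W = k ∧
        (∀ w ∈ W, w + v ∈ S) ∧
        c₁ * (Fintype.card F : ℝ) ^ (d - 1) ≤ (S.card : ℝ) ∧
        (S.card : ℝ) ≤ c₂ * (Fintype.card F : ℝ) ^ (d - 1) ∧
        ∀ f : (Fin d → F) → ℂ,
          (∑ m : Fin d → F,
              ‖(S.card : ℂ)⁻¹ * ∑ x ∈ S, f x * χ (∑ j, x j * m j)‖ ^ r) ^ ((1 : ℝ) / r) ≤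
            C * ((S.card : ℝ)⁻¹ * ∑ x ∈ S, ‖f x‖ ^ p) ^ ((1 : ℝ) / p)) :
    r ≥ p * ((d : ℝ) - k) / ((p - 1) * ((d : ℝ) - 1 - k)) := by
  by_contra hcon
  push_neg at hcon
  have hp0 : (0:ℝ) < p := by linarith
  have hr0 : (0:ℝ) < r := by linarith
  have hkd2 : k + 2 ≤ d := by omega
  have hkd : k ≤ d := by omega
  have hkd2' : (k:ℝ) + 2 ≤ (d:ℝ) := by exact_mod_cast hkd2
  set t : ℝ := (d:ℝ) - 1 - k with htdef
  have ht : (0:ℝ) < t := by rw [htdef]; linarith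
  have hdk : (0:ℝ) < (d:ℝ) - k := by linarith
  set u : ℝ := (p - 1)/p with hudef
  have hu : 0 < u := by rw [hudef]; exact div_pos (by linarith) hp0
  set ε : ℝ := ((d:ℝ) - k)/r - t * u with hεdef
  have hε : 0 < ε := by
    have h1 : r * ((p-1) * t) < p * ((d:ℝ)-k) := (lt_div_iff₀ (mul_pos (by linarith) ht)).mp hcon
    rw [hεdef, sub_pos, hudef, mul_div_assoc', div_lt_div_iff₀ hp0 hr0]
    nlinarith
  set K : ℝ := C * c₂ ^ u with hKdef
  have hK0 : 0 < K := by rw [hKdef]; positivity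
  obtain ⟨P, hP, hPp⟩ := Nat.exists_infinite_primes (⌈K ^ ((1:ℝ)/ε)⌉₊ + 2)
  haveI : Fact P.Prime := ⟨hPp⟩
  obtain ⟨χ, S, W, v, hχ, hWrank, hsub, hS1, hS2, hext⟩ := H (ZMod P)
  have hqcard : Fintype.card (ZMod P) = P := ZMod.card P
  rw [hqcard] at hS1 hS2
  set Q : ℝ := (P : ℝ) with hQdef
  have hQ1 : (1:ℝ) < Q := by rw [hQdef]; exact_mod_cast hPp.one_lt
  have hQ0 : (0:ℝ) < Q := by linarith
  set s : ℝ := (S.card : ℝ) with hsdef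
  have hS0 : (0:ℝ) < s := lt_of_lt_of_le (by positivity) hS1
  have key := keylemma d k hkd (ZMod P) χ S W v hWrank hsub p r C hp0 hr0 hS0 hext
  rw [hqcard] at key
  -- rewrite key into exponential form
  set X : ℝ := Q ^ k / s with hXdef
  have hX : 0 < X := by rw [hXdef]; positivity
  have hcastdk : ((d - k : ℕ) : ℝ) = (d:ℝ) - k := by
    have := Nat.cast_sub hkd (R := ℝ); exact this
  have lhs_eq : ((Q ^ (d - k) : ℝ) * ((Q ^ k / s) ^ r)) ^ ((1:ℝ)/r)
      = Q ^ (((d:ℝ) - k)/r) * X := by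
    rw [Real.mul_rpow (by positivity) (by positivity)]
    congr 1
    · rw [← Real.rpow_natCast Q (d - k), ← Real.rpow_mul hQ0.le, hcastdk, mul_one_div]
    · rw [← Real.rpow_mul hX.le, mul_one_div_cancel (ne_of_gt hr0), Real.rpow_one]
  have key2 : Q ^ (((d:ℝ) - k)/r) * X ≤ C * X ^ ((1:ℝ)/p) := by
    rw [← lhs_eq]
    have : (s⁻¹ * Q ^ k) = X := by rw [hXdef]; field_simp
    rw [← this]
    exact key
  have key3 : Q ^ (((d:ℝ) - k)/r) ≤ C * X ^ ((1:ℝ)/p - 1) := by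
    rw [Real.rpow_sub hX, Real.rpow_one, ← mul_div_assoc, le_div_iff₀ hX]
    exact key2
  -- lower bound on X
  have hXlb : c₂⁻¹ * Q ^ (-t) ≤ X := by
    have h1 : Q ^ k / (c₂ * Q ^ (d - 1)) ≤ X := by
      rw [hXdef]
      exact div_le_div_of_nonneg_left (by positivity) hS0 hS2
    have h2 : Q ^ k / (c₂ * Q ^ (d - 1)) = c₂⁻¹ * Q ^ (-t) := by
      have hc : ((d - 1 : ℕ) : ℝ) = (d:ℝ) - 1 := by
        have := Nat.cast_sub (show 1 ≤ d by omega) (R := ℝ); simpa using this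
      rw [← Real.rpow_natCast Q k, ← Real.rpow_natCast Q (d - 1), hc,
        div_eq_iff (by positivity), mul_mul_mul_comm,
        inv_mul_cancel₀ (ne_of_gt hc₂), one_mul, ← Real.rpow_add hQ0]
      congr 1
      rw [htdef]; ring
    rw [← h2]; exact h1
  have hexp : (1:ℝ)/p - 1 ≤ 0 := by
    have : (1:ℝ)/p ≤ 1 := by rw [div_le_one hp0]; linarith
    linarith
  have key4 : Q ^ (((d:ℝ) - k)/r) ≤ K * Q ^ (t * u) := by
    have h1 : X ^ ((1:ℝ)/p - 1) ≤ (c₂⁻¹ * Q ^ (-t)) ^ ((1:ℝ)/p - 1) :=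
      Real.rpow_le_rpow_of_nonpos (by positivity) hXlb hexp
    have h2 : (c₂⁻¹ * Q ^ (-t)) ^ ((1:ℝ)/p - 1) = c₂ ^ u * Q ^ (t * u) := by
      rw [Real.mul_rpow (by positivity) (by positivity)]
      congr 1
      · rw [← Real.rpow_neg_one c₂, ← Real.rpow_mul hc₂.le]
        congr 1
        rw [hudef]; field_simp; ring
      · rw [← Real.rpow_mul hQ0.le]
        congr 1
        rw [hudef]; field_simp; ring
    calc Q ^ (((d:ℝ) - k)/r) ≤ C * X ^ ((1:ℝ)/p - 1) := key3
      _ ≤ C * (c₂ ^ u * Q ^ (t * u)) := by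
          rw [← h2]; exact mul_le_mul_of_nonneg_left h1 hC.le
      _ = K * Q ^ (t * u) := by rw [hKdef]; ring
  have key5 : Q ^ ε ≤ K := by
    rw [hεdef, Real.rpow_sub hQ0]
    rw [div_le_iff₀ (by positivity)]
    exact key4
  -- contradiction
  have hbig : K < Q ^ ε := by
    have h1 : K ^ ((1:ℝ)/ε) < Q := by
      have h2 : K ^ ((1:ℝ)/ε) ≤ (⌈K ^ ((1:ℝ)/ε)⌉₊ : ℝ) := Nat.le_ceil _
      have h3 : ((⌈K ^ ((1:ℝ)/ε)⌉₊ : ℕ) : ℝ) + 2 ≤ Q := by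
        rw [hQdef]; exact_mod_cast hP
      linarith
    calc K = (K ^ ((1:ℝ)/ε)) ^ ε := by
          rw [← Real.rpow_mul hK0.le, one_div_mul_cancel (ne_of_gt hε), Real.rpow_one]
      _ < Q ^ ε := Real.rpow_lt_rpow (by positivity) h1 hε
  linarith
end

section
/- Let d ≥ 2 be even, a_1,…,a_d ∈ F_q nonzero, S = {x ∈ F_q^d : ∑ a_j x_j² = 0}, and dσ the normalized surface measure. If the extension estimate ‖(f dσ)^∨‖_{L^r(dm)} ≤ C‖f‖_{L^p(S,dσ)} holds with C independent of q (for a family of fields F_q with q → ∞), then r ≥ (2d−2)/(d−2). -/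
open Finset BigOperators
open scoped Classical ENNReal

namespace St12

variable {F : Type} [Field F] [Fintype F]

/-- trivial additive character facts -/
lemma addchar_ne_zero {ψ : AddChar F ℂ} (hψ : ψ ≠ 1) : ψ ≠ 0 := by
  intro h
  apply hψ
  rw [h]
  ext x
  simp

lemma map_sum' (ψ : AddChar F ℂ) {ι : Type*} (s : Finset ι) (f : ι → F) :
    ψ (∑ i ∈ s, f i) = ∏ i ∈ s, ψ (f i) := by
  classical
  induction s using Finset.cons_induction with
  | empty => simp
  | cons i s hi ih => rw [Finset.sum_cons, Finset.prod_cons, AddChar.map_add_eq_mul, ih]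

/-- orthogonality -/
lemma sum_ortho (ψ : AddChar F ℂ) (hψ : ψ ≠ 1) (u : F) :
    ∑ t : F, ψ (t * u) = if u = 0 then (Fintype.card F : ℂ) else 0 := by
  split_ifs with h
  · simp [h, Finset.card_univ]
  · have := Fintype.sum_equiv (Equiv.mulRight₀ u h) (fun t => ψ (t * u)) (fun s => ψ s)
      (fun t => rfl)
    rw [this]
    exact AddChar.sum_eq_zero_iff_ne_zero.mpr (addchar_ne_zero hψ)

lemma two_ne_zero' (hF : ringChar F ≠ 2) : (2 : F) ≠ 0 :=
  Ring.two_ne_zero hF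

lemma quadchar_sq_one_c {c : F} (hc : c ≠ 0) :
    ((quadraticChar F c : ℤ) : ℂ) ^ 2 = 1 := by
  have : (quadraticChar F c) ^ 2 = 1 := quadraticChar_sq_one hc
  have h2 : ((quadraticChar F c : ℤ) : ℂ) ^ 2 = (((quadraticChar F c) ^ 2 : ℤ) : ℂ) := by
    push_cast; ring
  rw [h2, this]
  norm_num

/-- quadratic Gauss sum without linear term -/
lemma sum_quad (ψ : AddChar F ℂ) (hψ : ψ ≠ 1) (hF : ringChar F ≠ 2) {c : F} (hc : c ≠ 0) :
    ∑ y : F, ψ (c * y ^ 2) =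
      ((quadraticChar F c : ℤ) : ℂ) *
        gaussSum ((quadraticChar F).ringHomComp (Int.castRingHom ℂ)) ψ := by
  set η := (quadraticChar F).ringHomComp (Int.castRingHom ℂ) with hη
  have step1 : ∑ y : F, ψ (c * y ^ 2) = ∑ u : F, (((quadraticChar F u : ℤ) : ℂ) + 1) * ψ (c * u) := by
    rw [← Finset.sum_fiberwise (univ : Finset F) (fun y : F => y ^ 2) (fun y => ψ (c * y ^ 2))]
    refine Finset.sum_congr rfl fun u _ => ?_
    have hcard : (univ.filter fun y : F => y ^ 2 = u).card = (quadraticChar F u + 1 : ℤ) := by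
      have := quadraticChar_card_sqrts hF u
      rw [← this]
      congr 1
      rw [Set.toFinset_setOf]
    calc ∑ y ∈ univ.filter fun y : F => y ^ 2 = u, ψ (c * y ^ 2)
        = ∑ y ∈ univ.filter fun y : F => y ^ 2 = u, ψ (c * u) := by
          refine Finset.sum_congr rfl fun y hy => ?_
          rw [Finset.mem_filter] at hy
          rw [hy.2]
      _ = ((univ.filter fun y : F => y ^ 2 = u).card : ℂ) * ψ (c * u) := by
          rw [Finset.sum_const, nsmul_eq_mul]
      _ = (((quadraticChar F u : ℤ) : ℂ) + 1) * ψ (c * u) := by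
          congr 1
          have : ((univ.filter fun y : F => y ^ 2 = u).card : ℤ) = quadraticChar F u + 1 := by
            exact_mod_cast hcard
          exact_mod_cast congrArg (fun z : ℤ => (z : ℂ)) this
  rw [step1]
  have split : ∑ u : F, (((quadraticChar F u : ℤ) : ℂ) + 1) * ψ (c * u)
      = (∑ u : F, ((quadraticChar F u : ℤ) : ℂ) * ψ (c * u)) + ∑ u : F, ψ (c * u) := by
    rw [← Finset.sum_add_distrib]
    refine Finset.sum_congr rfl fun u _ => by ring
  rw [split]
  have h2 : ∑ u : F, ψ (c * u) = 0 := by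
    have := sum_ortho ψ hψ c
    simp only [mul_comm] at this ⊢
    rw [this, if_neg hc]
  rw [h2, add_zero]
  -- now use gaussSum_mulShift
  have hgs : ∑ u : F, ((quadraticChar F u : ℤ) : ℂ) * ψ (c * u) = gaussSum η (AddChar.mulShift ψ c) := by
    refine Finset.sum_congr rfl fun u _ => ?_
    rw [AddChar.mulShift_apply]
    rfl
  rw [hgs]
  have hcu : IsUnit c := hc.isUnit
  have := gaussSum_mulShift η ψ hcu.unit
  have hval : η (hcu.unit : F) = ((quadraticChar F c : ℤ) : ℂ) := by
    simp [hη, MulChar.ringHomComp]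
  rw [IsUnit.unit_spec] at this hval
  calc gaussSum η (AddChar.mulShift ψ c)
      = 1 * gaussSum η (AddChar.mulShift ψ c) := by ring
    _ = (((quadraticChar F c : ℤ) : ℂ) ^ 2) * gaussSum η (AddChar.mulShift ψ c) := by
        rw [quadchar_sq_one_c hc]
    _ = ((quadraticChar F c : ℤ) : ℂ) * (η c * gaussSum η (AddChar.mulShift ψ c)) := by
        rw [← hval]; ring
    _ = ((quadraticChar F c : ℤ) : ℂ) * gaussSum η ψ := by rw [this]


/-- quadratic Gauss sum with linear term, after completing the square -/
lemma sum_quad_lin (ψ : AddChar F ℂ) (hψ : ψ ≠ 1) (hF : ringChar F ≠ 2) {c : F} (hc : c ≠ 0)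
    (b : F) :
    ∑ y : F, ψ (c * y ^ 2 + b * y) =
      ψ (-(b ^ 2) / (4 * c)) * (((quadraticChar F c : ℤ) : ℂ) *
        gaussSum ((quadraticChar F).ringHomComp (Int.castRingHom ℂ)) ψ) := by
  have h2 : (2 : F) ≠ 0 := two_ne_zero' hF
  have h4 : (4 : F) ≠ 0 := by
    have : (4 : F) = 2 * 2 := by norm_num
    rw [this]
    exact mul_ne_zero h2 h2
  have key : ∀ z : F, c * (z - b / (2 * c)) ^ 2 + b * (z - b / (2 * c))
      = c * z ^ 2 + (-(b ^ 2) / (4 * c)) := by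
    intro z
    field_simp
    ring
  have reindex : ∑ y : F, ψ (c * y ^ 2 + b * y)
      = ∑ z : F, ψ (c * (z - b / (2 * c)) ^ 2 + b * (z - b / (2 * c))) :=
    (Fintype.sum_equiv (Equiv.subRight (b / (2 * c))) _ _ (fun z => rfl)).symm
  rw [reindex]
  have : ∀ z : F, ψ (c * (z - b / (2 * c)) ^ 2 + b * (z - b / (2 * c)))
      = ψ (-(b ^ 2) / (4 * c)) * ψ (c * z ^ 2) := by
    intro z
    rw [key z, AddChar.map_add_eq_mul, mul_comm]
  simp_rw [this]
  rw [← Finset.mul_sum, sum_quad ψ hψ hF hc]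


/-- master character sum computation over the quadric -/
lemma master (ψ : AddChar F ℂ) (hψ : ψ ≠ 1) (hF : ringChar F ≠ 2)
    {d : ℕ} (hdev : Even d) (a : Fin d → F) (ha : ∀ j, a j ≠ 0)
    (w : Fin d → F) (hw : ∑ j, w j ^ 2 * (a j)⁻¹ = 0) :
    (Fintype.card F : ℂ) *
      ∑ x ∈ univ.filter fun x : Fin d → F => ∑ j, a j * x j ^ 2 = 0, ψ (∑ j, x j * w j)
    = (if w = 0 then (Fintype.card F : ℂ) ^ d else 0) +
      ((Fintype.card F : ℂ) - 1) * ((∏ j, ((quadraticChar F (a j) : ℤ) : ℂ)) *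
        gaussSum ((quadraticChar F).ringHomComp (Int.castRingHom ℂ)) ψ ^ d) := by
  set g := gaussSum ((quadraticChar F).ringHomComp (Int.castRingHom ℂ)) ψ with hg
  set q : ℂ := (Fintype.card F : ℂ) with hq
  have h2 : (2 : F) ≠ 0 := two_ne_zero' hF
  have h4 : (4 : F) ≠ 0 := by
    have h : (4 : F) = 2 * 2 := by norm_num
    rw [h]; exact mul_ne_zero h2 h2
  -- step A
  have hA : ∑ x : Fin d → F, (∑ t : F, ψ (t * ∑ j, a j * x j ^ 2)) * ψ (∑ j, x j * w j)
      = q * ∑ x ∈ univ.filter fun x : Fin d → F => ∑ j, a j * x j ^ 2 = 0,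
          ψ (∑ j, x j * w j) := by
    rw [Finset.mul_sum, Finset.sum_filter]
    refine Finset.sum_congr rfl fun x _ => ?_
    rw [sum_ortho ψ hψ]
    split_ifs with h
    · rfl
    · rw [zero_mul]
  rw [← hA]
  -- step B : swap and merge the character
  have hB : ∑ x : Fin d → F, (∑ t : F, ψ (t * ∑ j, a j * x j ^ 2)) * ψ (∑ j, x j * w j)
      = ∑ t : F, ∑ x : Fin d → F, ψ (∑ j, (t * a j * x j ^ 2 + w j * x j)) := by
    simp_rw [Finset.sum_mul]
    rw [Finset.sum_comm]
    refine Finset.sum_congr rfl fun t _ => Finset.sum_congr rfl fun x _ => ?_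
    rw [← AddChar.map_add_eq_mul]
    congr 1
    rw [Finset.mul_sum, ← Finset.sum_add_distrib]
    refine Finset.sum_congr rfl fun j _ => ?_
    ring
  rw [hB]
  -- step C : factor each inner sum
  have hC : ∀ t : F, ∑ x : Fin d → F, ψ (∑ j, (t * a j * x j ^ 2 + w j * x j))
      = ∏ j, ∑ y : F, ψ (t * a j * y ^ 2 + w j * y) := by
    intro t
    rw [Fintype.prod_sum (fun j (y : F) => ψ (t * a j * y ^ 2 + w j * y))]
    refine Finset.sum_congr rfl fun x _ => ?_
    rw [map_sum']
  simp_rw [hC]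
  -- step D : split off t = 0
  rw [← Finset.sum_erase_add univ _ (Finset.mem_univ (0 : F))]
  -- t = 0 term
  have hD0 : ∏ j, ∑ y : F, ψ ((0 : F) * a j * y ^ 2 + w j * y)
      = if w = 0 then q ^ d else 0 := by
    have hD0' : ∀ j, ∑ y : F, ψ ((0 : F) * a j * y ^ 2 + w j * y)
        = if w j = 0 then q else 0 := by
      intro j
      have : ∀ y : F, (0 : F) * a j * y ^ 2 + w j * y = y * w j := by intro y; ring
      simp_rw [this]
      exact sum_ortho ψ hψ (w j)
    simp_rw [hD0']
    by_cases hw0 : w = 0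
    · rw [if_pos hw0]
      have : ∀ j : Fin d, w j = 0 := fun j => by rw [hw0]; rfl
      simp only [this, if_true]
      rw [Finset.prod_const, Finset.card_univ, Fintype.card_fin]
    · rw [if_neg hw0]
      obtain ⟨j, hj⟩ := Function.ne_iff.mp hw0
      refine Finset.prod_eq_zero (Finset.mem_univ j) ?_
      have hj' : w j ≠ 0 := by simpa using hj
      rw [if_neg hj']
  -- t ≠ 0 terms
  have hD1 : ∀ t ∈ univ.erase (0 : F), ∏ j, ∑ y : F, ψ (t * a j * y ^ 2 + w j * y)
      = (∏ j, ((quadraticChar F (a j) : ℤ) : ℂ)) * g ^ d := by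
    intro t ht
    have ht0 : t ≠ 0 := (Finset.mem_erase.mp ht).1
    have hta : ∀ j, t * a j ≠ 0 := fun j => mul_ne_zero ht0 (ha j)
    have step : ∀ j : Fin d, ∑ y : F, ψ (t * a j * y ^ 2 + w j * y)
        = ψ (-(w j ^ 2) / (4 * (t * a j))) * (((quadraticChar F (t * a j) : ℤ) : ℂ) * g) := by
      intro j
      exact sum_quad_lin ψ hψ hF (hta j) (w j)
    simp_rw [step]
    rw [Finset.prod_mul_distrib]
    have fac1 : ∏ j, ψ (-(w j ^ 2) / (4 * (t * a j))) = 1 := by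
      rw [← map_sum']
      have : ∑ j, -(w j ^ 2) / (4 * (t * a j)) = -(4 * t)⁻¹ * ∑ j, w j ^ 2 * (a j)⁻¹ := by
        rw [Finset.mul_sum]
        refine Finset.sum_congr rfl fun j _ => ?_
        field_simp
      rw [this, hw, mul_zero, AddChar.map_zero_eq_one]
    rw [fac1, one_mul]
    have fac2 : ∏ j, (((quadraticChar F (t * a j) : ℤ) : ℂ) * g)
        = (∏ j, ((quadraticChar F (t * a j) : ℤ) : ℂ)) * g ^ d := by
      rw [Finset.prod_mul_distrib, Finset.prod_const, Finset.card_univ, Fintype.card_fin]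
    rw [fac2]
    congr 1
    have split : ∀ j : Fin d, ((quadraticChar F (t * a j) : ℤ) : ℂ)
        = ((quadraticChar F t : ℤ) : ℂ) * ((quadraticChar F (a j) : ℤ) : ℂ) := by
      intro j
      have := map_mul (quadraticChar F) t (a j)
      rw [this]
      push_cast
      ring
    simp_rw [split]
    rw [Finset.prod_mul_distrib, Finset.prod_const, Finset.card_univ, Fintype.card_fin]
    have hpow : ((quadraticChar F t : ℤ) : ℂ) ^ d = 1 := by
      obtain ⟨k, hk⟩ := hdev
      rw [hk, ← two_mul, pow_mul, quadchar_sq_one_c ht0, one_pow]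
    rw [hpow, one_mul]
  rw [Finset.sum_congr rfl hD1, hD0, Finset.sum_const, Finset.card_erase_of_mem
    (Finset.mem_univ _), Finset.card_univ, nsmul_eq_mul, add_comm]
  congr 2
  have hcard : 1 ≤ Fintype.card F := Fintype.card_pos
  push_cast [Nat.cast_sub hcard]
  ring


lemma norm_gauss (ψ : AddChar F ℂ) (hψ : ψ ≠ 1) (hF : ringChar F ≠ 2) :
    ‖gaussSum ((quadraticChar F).ringHomComp (Int.castRingHom ℂ)) ψ‖ ^ 2
      = (Fintype.card F : ℝ) := by
  set g := gaussSum ((quadraticChar F).ringHomComp (Int.castRingHom ℂ)) ψ with hg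
  have h1 : (quadraticChar F).ringHomComp (Int.castRingHom ℂ) ≠ 1 :=
    (MulChar.ringHomComp_ne_one_iff Int.cast_injective).mpr (quadraticChar_ne_one hF)
  have h2 := (quadraticChar_isQuadratic F).comp (Int.castRingHom ℂ)
  have h3 : ψ.IsPrimitive := AddChar.IsPrimitive.of_ne_one hψ
  have hsq := gaussSum_sq h1 h2 h3
  have hnorm : ‖g‖ ^ 2 = ‖g ^ 2‖ := by rw [norm_pow]
  rw [hnorm, hsq]
  have hqc : quadraticChar F (-1) = 1 ∨ quadraticChar F (-1) = -1 :=
    quadraticChar_dichotomy (neg_ne_zero.mpr one_ne_zero)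
  have hval : ‖((quadraticChar F).ringHomComp (Int.castRingHom ℂ)) (-1)‖ = 1 := by
    have : ((quadraticChar F).ringHomComp (Int.castRingHom ℂ)) (-1)
        = ((quadraticChar F (-1) : ℤ) : ℂ) := rfl
    rw [this]
    rcases hqc with h | h <;> rw [h] <;> norm_num
  rw [norm_mul, hval, one_mul, Complex.norm_natCast]


set_option maxHeartbeats 1600000 in
lemma key {F : Type} [Field F] [Fintype F] (hF : ringChar F ≠ 2)
    {d : ℕ} (hd : 2 ≤ d) (heven : Even d) {p r C : ℝ} (hp : 1 ≤ p) (hr : 1 ≤ r) (hC : 0 < C)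
    (χ : AddChar F ℂ) (a : Fin d → F) (hχ : χ ≠ 1) (ha : ∀ j, a j ≠ 0)
    (hIneq : ∀ f : (Fin d → F) → ℂ,
      (∑ m : Fin d → F,
          ‖((Finset.univ.filter fun x : Fin d → F => ∑ j, a j * x j ^ 2 = 0).card : ℂ)⁻¹ *
            ∑ x ∈ Finset.univ.filter fun x : Fin d → F => ∑ j, a j * x j ^ 2 = 0,
              f x * χ (∑ j, x j * m j)‖ ^ r) ^ ((1 : ℝ) / r) ≤
        C * (((Finset.univ.filter fun x : Fin d → F => ∑ j, a j * x j ^ 2 = 0).card : ℝ)⁻¹ *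
            ∑ x ∈ Finset.univ.filter fun x : Fin d → F => ∑ j, a j * x j ^ 2 = 0,
              ‖f x‖ ^ p) ^ ((1 : ℝ) / p)) :
    (Fintype.card F : ℝ) ^ ((d - 1 : ℝ) / r - (d - 2 : ℝ) / 2) ≤ 8 * C := by
  obtain ⟨k, hk2⟩ := heven
  set S := Finset.univ.filter fun x : Fin d → F => ∑ j, a j * x j ^ 2 = 0 with hS
  set q : ℕ := Fintype.card F with hq
  have hq2 : 2 ≤ q := Fintype.one_lt_card
  have hqR : (2:ℝ) ≤ (q:ℝ) := by exact_mod_cast hq2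
  have hqR0 : (0:ℝ) < (q:ℝ) := by linarith
  have hqC0 : (q:ℂ) ≠ 0 := Nat.cast_ne_zero.mpr (by omega)
  have hk1 : 1 ≤ k := by omega
  have hkd : k ≤ d - 1 := by omega
  set e : ℕ := d - 1 with he
  have hde : d = e + 1 := by omega
  have hked : k ≤ e := by omega
  set g := gaussSum ((quadraticChar F).ringHomComp (Int.castRingHom ℂ)) χ with hg
  set ε := ∏ j, ((quadraticChar F (a j) : ℤ) : ℂ) with hε
  set u : ℂ := (q:ℂ)⁻¹ * (((q:ℂ) - 1) * (ε * g ^ d)) with hu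
  have h0S : (0 : Fin d → F) ∈ S := by
    rw [hS, Finset.mem_filter]
    refine ⟨Finset.mem_univ _, ?_⟩
    simp
  set N := S.card with hN
  have hN1 : 1 ≤ N := Finset.card_pos.mpr ⟨0, h0S⟩
  have hNR0 : ((N:ℕ):ℝ) ≠ 0 := Nat.cast_ne_zero.mpr (by omega)
  -- counting via the master lemma with w = 0
  have hmaster0 := master χ hχ hF ⟨k, hk2⟩ a ha 0 (by simp)
  rw [← hS] at hmaster0
  have hsum0 : ∑ x ∈ S, χ (∑ j, x j * (0 : Fin d → F) j) = (N:ℂ) := by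
    have h1 : ∀ x ∈ S, χ (∑ j, x j * (0 : Fin d → F) j) = 1 := by
      intro x _
      have : ∀ j : Fin d, x j * (0 : Fin d → F) j = 0 := fun j => by simp
      simp_rw [this]
      simp
    rw [Finset.sum_congr rfl h1, Finset.sum_const, nsmul_eq_mul, mul_one]
  rw [hsum0, if_pos rfl] at hmaster0
  have hNC : (N:ℂ) = (q:ℂ) ^ e + u := by
    refine mul_left_cancel₀ hqC0 ?_
    rw [hmaster0, mul_add, hu, ← mul_assoc (q:ℂ), mul_inv_cancel₀ hqC0, one_mul]
    congr 1
    rw [hde, pow_succ]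
    ring
  -- norms
  have hgd : ‖g ^ d‖ = (q:ℝ) ^ k := by
    rw [norm_pow, hk2, ← two_mul, pow_mul, hg, norm_gauss χ hχ hF]
  have hεn : ‖ε‖ = 1 := by
    rw [hε, norm_prod]
    rw [Finset.prod_congr rfl fun j _ => ?_, Finset.prod_const_one]
    rcases quadraticChar_dichotomy (ha j) with h | h <;> rw [h] <;> norm_num
  have hun : ‖u‖ = (q:ℝ)⁻¹ * (((q:ℝ) - 1) * (q:ℝ) ^ k) := by
    rw [hu, norm_mul, norm_mul, norm_mul, norm_inv, hεn, one_mul, hgd, Complex.norm_natCast]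
    congr 2
    have h1 : ((q:ℂ) - 1) = (((q:ℝ) - 1 : ℝ) : ℂ) := by push_cast; ring
    rw [h1, Complex.norm_real, Real.norm_eq_abs, abs_of_nonneg (by linarith)]
  have hqk : (0:ℝ) < (q:ℝ) ^ k := pow_pos hqR0 k
  have hul : (q:ℝ) ^ k / 2 ≤ ‖u‖ := by
    rw [hun]
    rw [div_le_iff₀ (by norm_num : (0:ℝ) < 2)]
    rw [inv_mul_eq_div, div_mul_eq_mul_div, le_div_iff₀ hqR0]
    nlinarith [hqk, hqR]
  have huu : ‖u‖ ≤ (q:ℝ) ^ k := by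
    rw [hun, inv_mul_eq_div, div_le_iff₀ hqR0]
    nlinarith [hqk, hqR]
  have hNle : (N:ℝ) ≤ 2 * (q:ℝ) ^ e := by
    have h1 : ((N:ℕ):ℝ) = ‖((N:ℕ):ℂ)‖ := by rw [Complex.norm_natCast]
    rw [h1, hNC]
    refine le_trans (norm_add_le _ _) ?_
    rw [norm_pow, Complex.norm_natCast]
    have h2 : (q:ℝ) ^ k ≤ (q:ℝ) ^ e := pow_le_pow_right₀ (by linarith) hked
    linarith [huu]
  -- instantiate the estimate with f = 1
  have hmain := hIneq (fun _ => (1:ℂ))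
  simp only [one_mul, norm_one, Real.one_rpow, Finset.sum_const, nsmul_eq_mul, mul_one] at hmain
  rw [inv_mul_cancel₀ hNR0, Real.one_rpow, mul_one] at hmain
  have hr0 : r ≠ 0 := by positivity
  by_cases hNone : N = 1
  · -- the quadric is just the origin
    obtain ⟨b, hb⟩ := Finset.card_eq_one.mp hNone
    have hb0 : b = 0 := by
      have h1 := h0S
      rw [hb, Finset.mem_singleton] at h1
      exact h1.symm
    rw [hb0] at hb
    have hterm : ∀ m : Fin d → F, ‖((N:ℕ):ℂ)⁻¹ * ∑ x ∈ S, χ (∑ j, x j * m j)‖ ^ r = 1 := by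
      intro m
      rw [hb, Finset.sum_singleton, hNone]
      have h1 : ∀ j : Fin d, (0 : Fin d → F) j * m j = 0 := fun j => by simp
      simp_rw [h1]
      simp [Real.one_rpow]
    rw [Finset.sum_congr rfl fun m _ => hterm m, Finset.sum_const, nsmul_eq_mul, mul_one,
      Finset.card_univ] at hmain
    have hcardfun : (Fintype.card (Fin d → F) : ℝ) = (q:ℝ) ^ d := by
      rw [Fintype.card_fun, Fintype.card_fin]
      push_cast
      ring
    rw [hcardfun] at hmain
    have h1 : (q:ℝ) ^ ((d:ℝ) * ((1:ℝ)/r)) ≤ C := by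
      rw [Real.rpow_mul hqR0.le, Real.rpow_natCast]
      exact hmain
    have h2 : (q:ℝ) ^ ((d - 1 : ℝ) / r - (d - 2 : ℝ) / 2) ≤ (q:ℝ) ^ ((d:ℝ) * ((1:ℝ)/r)) := by
      refine Real.rpow_le_rpow_of_exponent_le (by linarith) ?_
      have hdd : ((d:ℝ) - 1) / r ≤ (d:ℝ) / r := by gcongr <;> linarith
      have hd2 : (0:ℝ) ≤ ((d:ℝ) - 2) / 2 := by
        have : (2:ℝ) ≤ (d:ℝ) := by exact_mod_cast hd
        linarith
      rw [mul_one_div]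
      linarith
    linarith
  · -- main case : N ≥ 2
    have hN2 : 2 ≤ N := by omega
    have hNR2 : (2:ℝ) ≤ ((N:ℕ):ℝ) := by exact_mod_cast hN2
    set φ : (Fin d → F) → (Fin d → F) := fun y j => a j * y j with hφ
    have hφinj : Function.Injective φ := by
      intro y z h
      funext j
      exact mul_left_cancel₀ (ha j) (congrFun h j)
    have hval : ∀ y ∈ S.erase 0, ∑ x ∈ S, χ (∑ j, x j * φ y j) = u := by
      intro y hy
      obtain ⟨hy0, hyS⟩ := Finset.mem_erase.mp hy
      have hySc : ∑ j, a j * y j ^ 2 = 0 := (Finset.mem_filter.mp hyS).2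
      have hw : ∑ j, (φ y j) ^ 2 * (a j)⁻¹ = 0 := by
        rw [← hySc]
        refine Finset.sum_congr rfl fun j _ => ?_
        have haj := ha j
        field_simp [hφ]
        ring
      have hm := master χ hχ hF ⟨k, hk2⟩ a ha (φ y) hw
      rw [← hS] at hm
      have hφy0 : φ y ≠ 0 := by
        intro hcon
        apply hy0
        funext j
        have h1 := congrFun hcon j
        have h2 : a j * y j = 0 := h1
        rcases mul_eq_zero.mp h2 with h | h
        · exact absurd h (ha j)
        · exact h
      rw [if_neg hφy0, zero_add] at hm
      have hqu : (q:ℂ) * u = ((q:ℂ) - 1) * (ε * g ^ d) := by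
        rw [hu, ← mul_assoc, mul_inv_cancel₀ hqC0, one_mul]
      exact mul_left_cancel₀ hqC0 (hm.trans hqu.symm)
    have hterm2 : ∀ y ∈ S.erase 0,
        ‖((N:ℕ):ℂ)⁻¹ * ∑ x ∈ S, χ (∑ j, x j * φ y j)‖ ^ r
          = (‖u‖ / ((N:ℕ):ℝ)) ^ r := by
      intro y hy
      rw [hval y hy, norm_mul, norm_inv, Complex.norm_natCast, inv_mul_eq_div]
    have hsub : (((N:ℕ):ℝ) - 1) * (‖u‖ / ((N:ℕ):ℝ)) ^ r
        ≤ ∑ m : Fin d → F, ‖((N:ℕ):ℂ)⁻¹ * ∑ x ∈ S, χ (∑ j, x j * m j)‖ ^ r := by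
      have h1 : ∑ m ∈ (S.erase 0).image φ,
          ‖((N:ℕ):ℂ)⁻¹ * ∑ x ∈ S, χ (∑ j, x j * m j)‖ ^ r
          = ∑ y ∈ S.erase 0, ‖((N:ℕ):ℂ)⁻¹ * ∑ x ∈ S, χ (∑ j, x j * φ y j)‖ ^ r :=
        Finset.sum_image fun y _ z _ h => hφinj h
      have h2 : ∑ y ∈ S.erase 0, ‖((N:ℕ):ℂ)⁻¹ * ∑ x ∈ S, χ (∑ j, x j * φ y j)‖ ^ r
          = ((S.erase 0).card : ℝ) * (‖u‖ / ((N:ℕ):ℝ)) ^ r := by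
        rw [Finset.sum_congr rfl hterm2, Finset.sum_const, nsmul_eq_mul]
      have h3 : ((S.erase 0).card : ℝ) = ((N:ℕ):ℝ) - 1 := by
        rw [Finset.card_erase_of_mem h0S, ← hN, Nat.cast_sub hN1, Nat.cast_one]
      have h4 : ∑ m ∈ (S.erase 0).image φ,
          ‖((N:ℕ):ℂ)⁻¹ * ∑ x ∈ S, χ (∑ j, x j * m j)‖ ^ r
          ≤ ∑ m : Fin d → F, ‖((N:ℕ):ℂ)⁻¹ * ∑ x ∈ S, χ (∑ j, x j * m j)‖ ^ r :=
        Finset.sum_le_sum_of_subset_of_nonneg (Finset.subset_univ _)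
          fun m _ _ => Real.rpow_nonneg (norm_nonneg _) r
      rw [← h3, ← h2, ← h1]
      exact h4
    have hx : (0:ℝ) ≤ ‖u‖ / ((N:ℕ):ℝ) := div_nonneg (norm_nonneg _) (Nat.cast_nonneg _)
    have hCge : (((N:ℕ):ℝ) - 1) ^ ((1:ℝ)/r) * (‖u‖ / ((N:ℕ):ℝ)) ≤ C := by
      have h3 : ((((N:ℕ):ℝ) - 1) * (‖u‖ / ((N:ℕ):ℝ)) ^ r) ^ ((1:ℝ)/r)
          = (((N:ℕ):ℝ) - 1) ^ ((1:ℝ)/r) * (‖u‖ / ((N:ℕ):ℝ)) := by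
        rw [Real.mul_rpow (by linarith) (Real.rpow_nonneg hx r)]
        congr 1
        rw [← Real.rpow_mul hx, mul_one_div, div_self hr0, Real.rpow_one]
      calc (((N:ℕ):ℝ) - 1) ^ ((1:ℝ)/r) * (‖u‖ / ((N:ℕ):ℝ))
          = ((((N:ℕ):ℝ) - 1) * (‖u‖ / ((N:ℕ):ℝ)) ^ r) ^ ((1:ℝ)/r) := h3.symm
        _ ≤ (∑ m : Fin d → F, ‖((N:ℕ):ℂ)⁻¹ * ∑ x ∈ S, χ (∑ j, x j * m j)‖ ^ r) ^ ((1:ℝ)/r) :=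
            Real.rpow_le_rpow (mul_nonneg (by linarith) (Real.rpow_nonneg hx r)) hsub (by positivity)
        _ ≤ C := hmain
    -- numeric endgame
    clear_value S N q e g ε u
    have hN2pos : (0:ℝ) < ((N:ℕ):ℝ) / 2 := by linarith
    have step1 : (((N:ℕ):ℝ)/2) ^ ((1:ℝ)/r) ≤ (((N:ℕ):ℝ) - 1) ^ ((1:ℝ)/r) :=
      Real.rpow_le_rpow (by linarith) (by linarith) (by positivity)
    have main1 : (((N:ℕ):ℝ)/2) ^ ((1:ℝ)/r) * (‖u‖ / ((N:ℕ):ℝ)) ≤ C :=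
      le_trans (mul_le_mul_of_nonneg_right step1 hx) hCge
    have main2 : (((N:ℕ):ℝ)/2) ^ ((1:ℝ)/r) * (((q:ℝ)^k/2) / ((N:ℕ):ℝ)) ≤ C := by
      refine le_trans (mul_le_mul_of_nonneg_left ?_ (Real.rpow_nonneg (by linarith) _)) main1
      have hNpos : (0:ℝ) < ((N:ℕ):ℝ) := by linarith
      exact div_le_div_of_nonneg_right hul hNpos.le
    have hid : (((N:ℕ):ℝ)/2) ^ ((1:ℝ)/r) * (((q:ℝ)^k/2) / ((N:ℕ):ℝ))
        = (((N:ℕ):ℝ)/2) ^ ((1:ℝ)/r - 1) * (q:ℝ)^k / 4 := by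
      rw [Real.rpow_sub hN2pos, Real.rpow_one]
      field_simp
      ring
    have hz : (1:ℝ)/r - 1 ≤ 0 := by
      have h1 : (1:ℝ)/r ≤ 1 := by
        rw [div_le_one (by positivity)]
        exact hr
      linarith
    have step2 : ((q:ℝ)^e) ^ ((1:ℝ)/r - 1) ≤ (((N:ℕ):ℝ)/2) ^ ((1:ℝ)/r - 1) :=
      Real.rpow_le_rpow_of_nonpos hN2pos (by linarith [hNle]) hz
    have main3 : ((q:ℝ)^e) ^ ((1:ℝ)/r - 1) * (q:ℝ)^k / 4 ≤ C := by
      refine le_trans ?_ main2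
      rw [hid]
      gcongr
    have hexp : ((q:ℝ)^e) ^ ((1:ℝ)/r - 1) * (q:ℝ)^k
        = (q:ℝ) ^ ((d - 1 : ℝ) / r - (d - 2 : ℝ) / 2) := by
      rw [← Real.rpow_natCast (q:ℝ) e, ← Real.rpow_natCast (q:ℝ) k, ← Real.rpow_mul hqR0.le,
        ← Real.rpow_add hqR0]
      congr 1
      have hecast : ((e:ℕ):ℝ) = (d:ℝ) - 1 := by
        rw [he, Nat.cast_sub (by omega : 1 ≤ d), Nat.cast_one]
      have hkcast : ((k:ℕ):ℝ) = (d:ℝ)/2 := by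
        have h1 : (d:ℝ) = (k:ℝ) + (k:ℝ) := by exact_mod_cast hk2
        linarith
      rw [hecast, hkcast]
      field_simp
      ring
    rw [← hexp]
    linarith

end St12

theorem statement12' (d : ℕ) (hd : 2 ≤ d) (heven : Even d)
    (p r C : ℝ) (hp : 1 ≤ p) (hr : 1 ≤ r) (hC : 0 < C)
    (H : ∀ (F : Type) [Field F] [Fintype F], ringChar F ≠ 2 →
      ∃ (χ : AddChar F ℂ) (a : Fin d → F),
        χ ≠ 1 ∧ (∀ j, a j ≠ 0) ∧
        ∀ f : (Fin d → F) → ℂ,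
          (∑ m : Fin d → F,
              ‖((Finset.univ.filter fun x : Fin d → F =>
                    ∑ j, a j * x j ^ 2 = 0).card : ℂ)⁻¹ *
                ∑ x ∈ Finset.univ.filter fun x : Fin d → F => ∑ j, a j * x j ^ 2 = 0,
                  f x * χ (∑ j, x j * m j)‖ ^ r) ^ ((1 : ℝ) / r) ≤
            C * (((Finset.univ.filter fun x : Fin d → F =>
                    ∑ j, a j * x j ^ 2 = 0).card : ℝ)⁻¹ *
                ∑ x ∈ Finset.univ.filter fun x : Fin d → F => ∑ j, a j * x j ^ 2 = 0,
                  ‖f x‖ ^ p) ^ ((1 : ℝ) / p)) :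
    ENNReal.ofReal r ≥ (2 * (d : ℝ≥0∞) - 2) / ((d : ℝ≥0∞) - 2) := by
  have hrpos : (0:ℝ) < r := by linarith
  have key2 : ((d:ℝ) - 1) / r ≤ ((d:ℝ) - 2) / 2 := by
    by_contra hcon
    push_neg at hcon
    set δ : ℝ := ((d:ℝ) - 1) / r - ((d:ℝ) - 2) / 2 with hδ
    have hδpos : 0 < δ := by rw [hδ]; linarith
    obtain ⟨q, hqge, hqprime⟩ := Nat.exists_infinite_primes
      (max 3 (⌈(8 * C) ^ ((1:ℝ)/δ)⌉₊ + 1))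
    haveI : Fact q.Prime := ⟨hqprime⟩
    have hq3 : 3 ≤ q := le_trans (le_max_left _ _) hqge
    have hqchar : ringChar (ZMod q) ≠ 2 := by
      rw [ZMod.ringChar_zmod_n]; omega
    obtain ⟨χ, a, hχ, ha, hIneq⟩ := H (ZMod q) hqchar
    have hkey := St12.key hqchar hd heven hp hr hC χ a hχ ha hIneq
    rw [ZMod.card] at hkey
    rw [← hδ] at hkey
    have h8C : (0:ℝ) < 8 * C := by linarith
    have hgt : (8 * C) < (q:ℝ) ^ δ := by
      have h1 : ((8 * C) ^ ((1:ℝ)/δ) : ℝ) < q := by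
        have h2 : ((8*C) ^ ((1:ℝ)/δ) : ℝ) ≤ (⌈(8 * C) ^ ((1:ℝ)/δ)⌉₊ : ℝ) := Nat.le_ceil _
        have h3 : (⌈(8 * C) ^ ((1:ℝ)/δ)⌉₊ + 1 : ℕ) ≤ q := le_trans (le_max_right _ _) hqge
        have h4 : ((⌈(8 * C) ^ ((1:ℝ)/δ)⌉₊ : ℝ) + 1) ≤ (q:ℝ) := by exact_mod_cast h3
        linarith
      calc (8*C : ℝ) = ((8*C) ^ ((1:ℝ)/δ)) ^ δ := by
            rw [← Real.rpow_mul h8C.le, one_div, inv_mul_cancel₀ (ne_of_gt hδpos),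
              Real.rpow_one]
        _ < (q:ℝ) ^ δ := Real.rpow_lt_rpow (Real.rpow_nonneg h8C.le _) h1 hδpos
    linarith
  rcases eq_or_lt_of_le hd with hd2 | hd3
  · exfalso
    have hdR : (d:ℝ) = 2 := by exact_mod_cast hd2.symm
    rw [hdR] at key2
    norm_num at key2
    linarith
  · have hdR : (3:ℝ) ≤ (d:ℝ) := by exact_mod_cast hd3
    have hr2 : ((2*d - 2 : ℕ) : ℝ) ≤ r * ((d - 2 : ℕ) : ℝ) := by
      rw [div_le_div_iff₀ hrpos (by norm_num : (0:ℝ) < 2)] at key2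
      have hc1 : ((2*d - 2 : ℕ) : ℝ) = 2 * (d:ℝ) - 2 := by
        have : 2 ≤ 2 * d := by omega
        push_cast [Nat.cast_sub this]
        ring
      have hc2 : ((d - 2 : ℕ) : ℝ) = (d:ℝ) - 2 := by
        have : 2 ≤ d := hd
        push_cast [Nat.cast_sub this]
        ring
      rw [hc1, hc2]
      linarith
    have e1 : (2 * (d : ℝ≥0∞) - 2) = ((2*d - 2 : ℕ) : ℝ≥0∞) := by
      rw [ENNReal.natCast_sub]
      push_cast
      ring
    have e2 : ((d : ℝ≥0∞) - 2) = ((d - 2 : ℕ) : ℝ≥0∞) := by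
      rw [ENNReal.natCast_sub]
      push_cast
      ring
    rw [ge_iff_le, e1, e2]
    have hne0 : ((d - 2 : ℕ) : ℝ≥0∞) ≠ 0 := by
      simp only [ne_eq, Nat.cast_eq_zero]
      omega
    have hnetop : ((d - 2 : ℕ) : ℝ≥0∞) ≠ ⊤ := ENNReal.natCast_ne_top _
    rw [ENNReal.div_le_iff hne0 hnetop]
    calc ((2*d - 2 : ℕ) : ℝ≥0∞) = ENNReal.ofReal ((2*d - 2 : ℕ) : ℝ) := by
          rw [ENNReal.ofReal_natCast]
      _ ≤ ENNReal.ofReal (r * ((d - 2 : ℕ) : ℝ)) := ENNReal.ofReal_le_ofReal hr2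
      _ = ENNReal.ofReal r * ENNReal.ofReal (((d - 2 : ℕ) : ℝ)) := by
          rw [ENNReal.ofReal_mul (by linarith)]
      _ = ENNReal.ofReal r * ((d - 2 : ℕ) : ℝ≥0∞) := by
          rw [ENNReal.ofReal_natCast]



/-- necessary condition in even dimensions. If for every finite field of
odd characteristic there are a nontrivial additive character and nonzero coefficients
`a₁,…,a_d` for which the extension estimate `R*(p → r) ≤ C` holds with `C` independent
of `q`, then `r ≥ (2d−2)/(d−2)` (read in `ℝ≥0∞`, so the case `d = 2` forces `r = ∞`,
i.e. the hypothesis cannot hold). -/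
theorem statement12 (d : ℕ) (hd : 2 ≤ d) (heven : Even d)
    (p r C : ℝ) (hp : 1 ≤ p) (hr : 1 ≤ r) (hC : 0 < C)
    (H : ∀ (F : Type) [Field F] [Fintype F], ringChar F ≠ 2 →
      ∃ (χ : AddChar F ℂ) (a : Fin d → F),
        χ ≠ 1 ∧ (∀ j, a j ≠ 0) ∧
        ∀ f : (Fin d → F) → ℂ,
          (∑ m : Fin d → F,
              ‖((Finset.univ.filter fun x : Fin d → F =>
                    ∑ j, a j * x j ^ 2 = 0).card : ℂ)⁻¹ *
                ∑ x ∈ Finset.univ.filter fun x : Fin d → F => ∑ j, a j * x j ^ 2 = 0,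
                  f x * χ (∑ j, x j * m j)‖ ^ r) ^ ((1 : ℝ) / r) ≤
            C * (((Finset.univ.filter fun x : Fin d → F =>
                    ∑ j, a j * x j ^ 2 = 0).card : ℝ)⁻¹ *
                ∑ x ∈ Finset.univ.filter fun x : Fin d → F => ∑ j, a j * x j ^ 2 = 0,
                  ‖f x‖ ^ p) ^ ((1 : ℝ) / p)) :
    ENNReal.ofReal r ≥ (2 * (d : ℝ≥0∞) - 2) / ((d : ℝ≥0∞) - 2) :=
  statement12' d hd heven p r C hp hr hC H
end
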